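/- arXiv:2407.05719 — 8 statements merged into one kernel-verified Lean document; each statement's English description precedes it below -/
import Mathlib

section
/- For every real x > 0, −2π Σ_{n=1}^∞ (−1)^n n^2 e^{−π n^2 x} = (1/(2 x^{5/2})) · Σ_{n=0}^∞ ((2n+1)^2 π − 2x) · e^{−(π/(4x))(2n+1)^2}, both series being absolutely convergent. -/
open Real

lemma aux_sumN {c : ℝ} (hc : 0 < c) (k : ℕ) :
    Summable fun n : ℕ => ((n : ℝ) + 1) ^ k * Real.exp (-c * ((n : ℝ) + 1)) := by
  have hr : ‖Real.exp (-c)‖ < 1 := by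
    rw [Real.norm_eq_abs, abs_of_pos (Real.exp_pos _)]
    exact Real.exp_lt_one_iff.mpr (by linarith)
  have h := (summable_pow_mul_geometric_of_norm_lt_one k hr).comp_injective
    (add_left_injective 1)
  refine h.congr fun n => ?_
  simp only [Function.comp_apply]
  rw [← Real.exp_nat_mul]
  push_cast
  ring_nf

lemma aux_sumZ {c : ℝ} (hc : 0 < c) (k : ℕ) :
    Summable fun n : ℤ => (|(n : ℝ)| + 1) ^ k * Real.exp (-c * |(n : ℝ)|) := by
  have base : Summable fun n : ℕ => ((n : ℝ) + 1) ^ k * Real.exp (-c * (n : ℝ)) := by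
    have := ((aux_sumN hc k).mul_left (Real.exp (-c))⁻¹)
    refine this.congr fun n => ?_
    rw [show -c * ((n : ℝ) + 1) = -c * n + -c by ring, Real.exp_add]
    field_simp
  apply Summable.of_nat_of_neg
  · refine base.congr fun n => by push_cast [abs_of_nonneg (by positivity : (0:ℝ) ≤ (n:ℝ))]; ring
  · refine base.congr fun n => ?_
    push_cast
    rw [abs_neg, abs_of_nonneg (by positivity : (0:ℝ) ≤ (n:ℝ))]

lemma FG {x : ℝ} (hx : 0 < x) :
    ∑' n : ℤ, (-1 : ℝ) ^ n * Real.exp (-π * (n : ℝ) ^ 2 * x)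
      = x ^ (-(1 / 2) : ℝ) * ∑' n : ℤ, Real.exp (-π * ((n : ℝ) + 1 / 2) ^ 2 / x) := by
  have key := Complex.tsum_exp_neg_quadratic (a := (x : ℂ)) (by simpa using hx) (-Complex.I / 2)
  have h1 : ∀ n : ℤ, Complex.exp (-(π : ℂ) * (x : ℂ) * (n : ℂ) ^ 2 + 2 * π * (-Complex.I / 2) * n)
      = (((-1 : ℝ) ^ n * Real.exp (-π * (n : ℝ) ^ 2 * x) : ℝ) : ℂ) := by
    intro n
    rw [Complex.exp_add]
    have e1 : (2 * (π:ℂ) * (-Complex.I / 2) * n) = (-n : ℤ) * ((π:ℂ) * Complex.I) := by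
      push_cast; ring
    rw [e1, Complex.exp_int_mul, Complex.exp_pi_mul_I]
    have e2 : Complex.exp (-(π : ℂ) * (x : ℂ) * (n : ℂ) ^ 2)
        = ((Real.exp (-π * (n : ℝ) ^ 2 * x) : ℝ) : ℂ) := by
      rw [Complex.ofReal_exp]; congr 1; push_cast; ring
    rw [e2]
    push_cast
    rw [zpow_neg, show (((-1:ℂ)) ^ n)⁻¹ = ((-1:ℂ)^n) by
      rcases Int.even_or_odd n with h | h
      · rw [h.neg_one_zpow]; norm_num
      · rw [h.neg_one_zpow]; norm_num]
    ring
  have h2 : ∀ n : ℤ, Complex.exp (-(π : ℂ) / (x : ℂ) * ((n : ℂ) + Complex.I * (-Complex.I / 2)) ^ 2)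
      = ((Real.exp (-π * ((n : ℝ) + 1 / 2) ^ 2 / x) : ℝ) : ℂ) := by
    intro n
    rw [Complex.ofReal_exp]
    congr 1
    have : Complex.I * (-Complex.I / 2) = 1 / 2 := by
      have := Complex.I_mul_I
      field_simp
      rw [Complex.I_sq]; ring
    rw [this]
    push_cast
    ring
  rw [tsum_congr h1, tsum_congr h2, ← Complex.ofReal_tsum, ← Complex.ofReal_tsum] at key
  have hpow : 1 / (x : ℂ) ^ (1 / 2 : ℂ) = ((x ^ (-(1 / 2) : ℝ) : ℝ) : ℂ) := by
    rw [show ((1:ℂ)/2) = ((1/2 : ℝ) : ℂ) by norm_num, ← Complex.ofReal_cpow hx.le,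
      Real.rpow_neg hx.le, Complex.ofReal_inv, one_div]
  rw [hpow, ← Complex.ofReal_mul] at key
  exact_mod_cast key



lemma abs_le_sq_int (n : ℤ) : |(n : ℝ)| ≤ (n : ℝ) ^ 2 := by
  rcases eq_or_ne n 0 with rfl | h
  · simp
  · have h1 : (1 : ℝ) ≤ |(n : ℝ)| := by
      rw [← Int.cast_abs]; exact_mod_cast Int.one_le_abs h
    nlinarith [abs_nonneg (n : ℝ), sq_abs (n : ℝ)]

lemma hasDerivF {x : ℝ} (hx : 0 < x) :
    HasDerivAt (fun y : ℝ => ∑' n : ℤ, (-1 : ℝ) ^ n * Real.exp (-π * (n : ℝ) ^ 2 * y))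
      (∑' n : ℤ, (-1 : ℝ) ^ n * (-π * (n : ℝ) ^ 2) * Real.exp (-π * (n : ℝ) ^ 2 * x)) x := by
  have hc : 0 < π * x / 2 := by positivity
  have hu : Summable fun n : ℤ => π * (|(n : ℝ)| + 1) ^ 2 * Real.exp (-(π * x / 2) * |(n : ℝ)|) :=
    ((aux_sumZ hc 2).mul_left π).congr fun n => by ring
  have hg : ∀ (n : ℤ) (y : ℝ), y ∈ Set.Ioi (x / 2) →
      HasDerivAt (fun y : ℝ => (-1 : ℝ) ^ n * Real.exp (-π * (n : ℝ) ^ 2 * y))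
        ((-1 : ℝ) ^ n * (-π * (n : ℝ) ^ 2) * Real.exp (-π * (n : ℝ) ^ 2 * y)) y := by
    intro n y _
    have h := ((hasDerivAt_id y).const_mul (-π * (n : ℝ) ^ 2)).exp.const_mul ((-1 : ℝ) ^ n)
    simp only [id_eq, mul_one] at h
    exact h.congr_deriv (by ring)
  have hb : ∀ (n : ℤ) (y : ℝ), y ∈ Set.Ioi (x / 2) →
      ‖(-1 : ℝ) ^ n * (-π * (n : ℝ) ^ 2) * Real.exp (-π * (n : ℝ) ^ 2 * y)‖ ≤
        π * (|(n : ℝ)| + 1) ^ 2 * Real.exp (-(π * x / 2) * |(n : ℝ)|) := by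
    intro n y hy
    rw [Set.mem_Ioi] at hy
    rw [Real.norm_eq_abs, abs_mul, abs_mul, abs_neg_one_zpow, one_mul, Real.abs_exp]
    have hn2 := abs_le_sq_int n
    have e1 : |(-π * (n : ℝ) ^ 2)| ≤ π * (|(n : ℝ)| + 1) ^ 2 := by
      rw [abs_mul, abs_neg, abs_of_pos pi_pos, abs_sq]
      have : (n : ℝ) ^ 2 ≤ (|(n : ℝ)| + 1) ^ 2 := by
        nlinarith [abs_nonneg (n : ℝ), sq_abs (n : ℝ)]
      nlinarith [pi_pos]
    have e2 : Real.exp (-π * (n : ℝ) ^ 2 * y) ≤ Real.exp (-(π * x / 2) * |(n : ℝ)|) := by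
      apply Real.exp_le_exp.mpr
      have h2 : π * |(n : ℝ)| * (x / 2) ≤ π * (n : ℝ) ^ 2 * (x / 2) :=
        mul_le_mul_of_nonneg_right (mul_le_mul_of_nonneg_left hn2 pi_pos.le) (by linarith)
      have h3 : π * (n : ℝ) ^ 2 * (x / 2) ≤ π * (n : ℝ) ^ 2 * y :=
        mul_le_mul_of_nonneg_left hy.le (by positivity)
      nlinarith
    calc |(-π * (n : ℝ) ^ 2)| * Real.exp (-π * (n : ℝ) ^ 2 * y)
        ≤ (π * (|(n : ℝ)| + 1) ^ 2) * Real.exp (-(π * x / 2) * |(n : ℝ)|) :=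
          mul_le_mul e1 e2 (Real.exp_pos _).le (by positivity)
      _ = _ := by ring
  have h0 : Summable fun n : ℤ => (-1 : ℝ) ^ n * Real.exp (-π * (n : ℝ) ^ 2 * x) := by
    apply Summable.of_norm
    refine (aux_sumZ (by positivity : (0:ℝ) < π * x) 0).of_nonneg_of_le
      (fun n => norm_nonneg _) fun n => ?_
    rw [Real.norm_eq_abs, abs_mul, abs_neg_one_zpow, one_mul, Real.abs_exp, pow_zero, one_mul]
    apply Real.exp_le_exp.mpr
    nlinarith [pi_pos, hx, mul_le_mul_of_nonneg_left (abs_le_sq_int n) pi_pos.le]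
  exact hasDerivAt_tsum_of_isPreconnected hu isOpen_Ioi isPreconnected_Ioi hg hb
    (Set.mem_Ioi.mpr (by linarith)) h0 (Set.mem_Ioi.mpr (by linarith))


lemma half_sq_ge (n : ℤ) : |(n : ℝ)| - 1 ≤ ((n : ℝ) + 1 / 2) ^ 2 := by
  nlinarith [sq_nonneg (|(n : ℝ)| - 1), sq_abs (n : ℝ), neg_abs_le (n : ℝ)]

lemma half_sq_le (n : ℤ) : ((n : ℝ) + 1 / 2) ^ 2 ≤ (|(n : ℝ)| + 1) ^ 2 := by
  nlinarith [sq_abs (n : ℝ), neg_abs_le (n : ℝ), le_abs_self (n : ℝ), abs_nonneg (n : ℝ)]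

lemma hasDerivH {x : ℝ} (hx : 0 < x) :
    HasDerivAt (fun y : ℝ => ∑' n : ℤ, Real.exp (-π * ((n : ℝ) + 1 / 2) ^ 2 / y))
      (∑' n : ℤ, π * ((n : ℝ) + 1 / 2) ^ 2 / x ^ 2 * Real.exp (-π * ((n : ℝ) + 1 / 2) ^ 2 / x))
      x := by
  have hc : 0 < π / (2 * x) := by positivity
  have hu : Summable fun n : ℤ =>
      (4 * π / x ^ 2 * Real.exp (π / (2 * x))) *
        ((|(n : ℝ)| + 1) ^ 2 * Real.exp (-(π / (2 * x)) * |(n : ℝ)|)) :=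
    (aux_sumZ hc 2).mul_left _
  have hg : ∀ (n : ℤ) (y : ℝ), y ∈ Set.Ioo (x / 2) (2 * x) →
      HasDerivAt (fun y : ℝ => Real.exp (-π * ((n : ℝ) + 1 / 2) ^ 2 / y))
        (π * ((n : ℝ) + 1 / 2) ^ 2 / y ^ 2 * Real.exp (-π * ((n : ℝ) + 1 / 2) ^ 2 / y)) y := by
    intro n y hy
    have hy0 : y ≠ 0 := by have := hy.1; intro h; rw [h] at this; linarith [this, hx]
    have h := ((hasDerivAt_inv hy0).const_mul (-π * ((n : ℝ) + 1 / 2) ^ 2)).exp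
    have e : ∀ z : ℝ, -π * ((n : ℝ) + 1 / 2) ^ 2 * z⁻¹ = -π * ((n : ℝ) + 1 / 2) ^ 2 / z :=
      fun z => (div_eq_mul_inv _ _).symm
    simp only [e] at h
    convert h using 1
    rw [mul_comm]
    congr 1
    field_simp
  have hb : ∀ (n : ℤ) (y : ℝ), y ∈ Set.Ioo (x / 2) (2 * x) →
      ‖π * ((n : ℝ) + 1 / 2) ^ 2 / y ^ 2 * Real.exp (-π * ((n : ℝ) + 1 / 2) ^ 2 / y)‖ ≤
        (4 * π / x ^ 2 * Real.exp (π / (2 * x))) *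
          ((|(n : ℝ)| + 1) ^ 2 * Real.exp (-(π / (2 * x)) * |(n : ℝ)|)) := by
    intro n y hy
    obtain ⟨hy1, hy2⟩ := hy
    have hy0 : 0 < y := by linarith
    have hcn : (0 : ℝ) ≤ π * ((n : ℝ) + 1 / 2) ^ 2 := by positivity
    rw [Real.norm_eq_abs, abs_mul, Real.abs_exp, abs_div, abs_of_nonneg hcn,
      abs_of_nonneg (by positivity : (0:ℝ) ≤ y ^ 2)]
    have e1 : π * ((n : ℝ) + 1 / 2) ^ 2 / y ^ 2 ≤ 4 * π / x ^ 2 * (|(n : ℝ)| + 1) ^ 2 := by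
      rw [div_le_iff₀ (by positivity)]
      have h1 : π * ((n : ℝ) + 1 / 2) ^ 2 ≤ π * (|(n : ℝ)| + 1) ^ 2 :=
        mul_le_mul_of_nonneg_left (half_sq_le n) pi_pos.le
      have h2 : x ^ 2 / 4 ≤ y ^ 2 := by nlinarith
      have h3 : (0 : ℝ) ≤ (|(n : ℝ)| + 1) ^ 2 := by positivity
      have h4 : π * (|(n : ℝ)| + 1) ^ 2 * (x ^ 2 / 4) ≤ π * (|(n : ℝ)| + 1) ^ 2 * y ^ 2 :=
        mul_le_mul_of_nonneg_left h2 (by positivity)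
      calc π * ((n : ℝ) + 1 / 2) ^ 2 ≤ π * (|(n : ℝ)| + 1) ^ 2 := h1
        _ = 4 * π / x ^ 2 * (|(n : ℝ)| + 1) ^ 2 * (x ^ 2 / 4) := by field_simp
        _ ≤ 4 * π / x ^ 2 * (|(n : ℝ)| + 1) ^ 2 * y ^ 2 := by
            apply mul_le_mul_of_nonneg_left _ (by positivity)
            nlinarith
    have e2 : Real.exp (-π * ((n : ℝ) + 1 / 2) ^ 2 / y) ≤
        Real.exp (π / (2 * x)) * Real.exp (-(π / (2 * x)) * |(n : ℝ)|) := by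
      rw [← Real.exp_add]
      apply Real.exp_le_exp.mpr
      have step1 : π * (|(n : ℝ)| - 1) / (2 * x) ≤ π * ((n : ℝ) + 1 / 2) ^ 2 / (2 * x) :=
        (div_le_div_iff_of_pos_right (by positivity)).mpr
          (mul_le_mul_of_nonneg_left (half_sq_ge n) pi_pos.le)
      have step2 : π * ((n : ℝ) + 1 / 2) ^ 2 / (2 * x) ≤ π * ((n : ℝ) + 1 / 2) ^ 2 / y :=
        div_le_div_of_nonneg_left hcn hy0 (by linarith)
      have eq1 : π * (|(n : ℝ)| - 1) / (2 * x) = π / (2 * x) * |(n : ℝ)| - π / (2 * x) := by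
        field_simp
      have : -(π * ((n : ℝ) + 1 / 2) ^ 2 / y) ≤ π / (2 * x) + -(π / (2 * x)) * |(n : ℝ)| := by
        nlinarith [Real.exp_pos (π / (2 * x))]
      calc -π * ((n : ℝ) + 1 / 2) ^ 2 / y = -(π * ((n : ℝ) + 1 / 2) ^ 2 / y) := by ring
        _ ≤ _ := this
    calc π * ((n : ℝ) + 1 / 2) ^ 2 / y ^ 2 * Real.exp (-π * ((n : ℝ) + 1 / 2) ^ 2 / y)
        ≤ (4 * π / x ^ 2 * (|(n : ℝ)| + 1) ^ 2) *
            (Real.exp (π / (2 * x)) * Real.exp (-(π / (2 * x)) * |(n : ℝ)|)) :=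
          mul_le_mul e1 e2 (Real.exp_pos _).le (by positivity)
      _ = _ := by ring
  have h0 : Summable fun n : ℤ => Real.exp (-π * ((n : ℝ) + 1 / 2) ^ 2 / x) := by
    refine ((aux_sumZ (by positivity : (0:ℝ) < π / x) 0).mul_left (Real.exp (π / x))
      ).of_nonneg_of_le (fun n => (Real.exp_pos _).le) fun n => ?_
    rw [pow_zero, one_mul, ← Real.exp_add]
    apply Real.exp_le_exp.mpr
    have h6 := half_sq_ge n
    have h7 : π * (|(n : ℝ)| - 1) / x ≤ π * ((n : ℝ) + 1 / 2) ^ 2 / x :=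
      (div_le_div_iff_of_pos_right hx).mpr (mul_le_mul_of_nonneg_left h6 pi_pos.le)
    have eq1 : π * (|(n : ℝ)| - 1) / x = π / x * |(n : ℝ)| - π / x := by field_simp
    calc -π * ((n : ℝ) + 1 / 2) ^ 2 / x = -(π * ((n : ℝ) + 1 / 2) ^ 2 / x) := by ring
      _ ≤ π / x + -(π / x) * |(n : ℝ)| := by nlinarith
  exact hasDerivAt_tsum_of_isPreconnected hu isOpen_Ioo isPreconnected_Ioo hg hb
    (Set.mem_Ioo.mpr ⟨by linarith, by linarith⟩) h0 (Set.mem_Ioo.mpr ⟨by linarith, by linarith⟩)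

lemma earg {x : ℝ} (hx : 0 < x) (t : ℝ) :
    -π * (t + 1 / 2) ^ 2 / x = -(π / (4 * x)) * (2 * t + 1) ^ 2 := by
  field_simp
  ring

lemma negarg (n : ℕ) : ((-((n : ℤ) + 1) : ℤ) : ℝ) + 1 / 2 = -(((n : ℝ)) + 1 / 2) := by
  push_cast
  ring

lemma convH {x : ℝ} (hx : 0 < x)
    (sH : Summable fun n : ℕ => Real.exp (-(π / (4 * x)) * (2 * (n : ℝ) + 1) ^ 2)) :
    (∑' n : ℤ, Real.exp (-π * ((n : ℝ) + 1 / 2) ^ 2 / x))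
      = 2 * ∑' n : ℕ, Real.exp (-(π / (4 * x)) * (2 * (n : ℝ) + 1) ^ 2) := by
  set f : ℤ → ℝ := fun n => Real.exp (-π * ((n : ℝ) + 1 / 2) ^ 2 / x) with hf
  have eq_nat : ∀ n : ℕ, f ((n : ℕ) : ℤ) = Real.exp (-(π / (4 * x)) * (2 * (n : ℝ) + 1) ^ 2) := by
    intro n
    simp only [hf, Int.cast_natCast]
    rw [earg hx]
  have eq_neg : ∀ n : ℕ, f (-((n : ℤ) + 1)) = Real.exp (-(π / (4 * x)) * (2 * (n : ℝ) + 1) ^ 2) := by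
    intro n
    simp only [hf]
    rw [negarg, neg_sq, earg hx]
  have s1 : Summable fun n : ℕ => f ((n : ℕ) : ℤ) := sH.congr fun n => (eq_nat n).symm
  have s2 : Summable fun n : ℕ => f (-((n : ℤ) + 1)) := sH.congr fun n => (eq_neg n).symm
  rw [tsum_of_nat_of_neg_add_one s1 s2, tsum_congr eq_nat, tsum_congr eq_neg]
  ring

lemma convB {x : ℝ} (hx : 0 < x)
    (sU : Summable fun n : ℕ =>
      π * (2 * (n : ℝ) + 1) ^ 2 * Real.exp (-(π / (4 * x)) * (2 * (n : ℝ) + 1) ^ 2)) :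
    (∑' n : ℤ, π * ((n : ℝ) + 1 / 2) ^ 2 / x ^ 2 * Real.exp (-π * ((n : ℝ) + 1 / 2) ^ 2 / x))
      = 2 * ((1 / (4 * x ^ 2)) * ∑' n : ℕ,
          π * (2 * (n : ℝ) + 1) ^ 2 * Real.exp (-(π / (4 * x)) * (2 * (n : ℝ) + 1) ^ 2)) := by
  set f : ℤ → ℝ := fun n =>
    π * ((n : ℝ) + 1 / 2) ^ 2 / x ^ 2 * Real.exp (-π * ((n : ℝ) + 1 / 2) ^ 2 / x) with hf
  have eq_nat : ∀ n : ℕ, f ((n : ℕ) : ℤ) = (1 / (4 * x ^ 2)) *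
      (π * (2 * (n : ℝ) + 1) ^ 2 * Real.exp (-(π / (4 * x)) * (2 * (n : ℝ) + 1) ^ 2)) := by
    intro n
    simp only [hf, Int.cast_natCast]
    rw [earg hx]
    ring
  have eq_neg : ∀ n : ℕ, f (-((n : ℤ) + 1)) = (1 / (4 * x ^ 2)) *
      (π * (2 * (n : ℝ) + 1) ^ 2 * Real.exp (-(π / (4 * x)) * (2 * (n : ℝ) + 1) ^ 2)) := by
    intro n
    simp only [hf]
    rw [negarg, neg_sq, earg hx]
    ring
  have s1 : Summable fun n : ℕ => f ((n : ℕ) : ℤ) :=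
    ((sU.mul_left (1 / (4 * x ^ 2)))).congr fun n => (eq_nat n).symm
  have s2 : Summable fun n : ℕ => f (-((n : ℤ) + 1)) :=
    ((sU.mul_left (1 / (4 * x ^ 2)))).congr fun n => (eq_neg n).symm
  rw [tsum_of_nat_of_neg_add_one s1 s2, tsum_congr eq_nat, tsum_congr eq_neg, tsum_mul_left]
  ring

lemma convA {x : ℝ}
    (sum1 : Summable fun n : ℕ => (-1 : ℝ) ^ (n + 1) * ((n : ℝ) + 1) ^ 2 *
        Real.exp (-π * ((n : ℝ) + 1) ^ 2 * x))
    (sA1 : Summable fun n : ℕ =>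
      (-1 : ℝ) ^ ((n : ℕ) : ℤ) * (-π * (((n : ℕ) : ℤ) : ℝ) ^ 2) * Real.exp (-π * (((n : ℕ) : ℤ) : ℝ) ^ 2 * x)) :
    (∑' n : ℤ, (-1 : ℝ) ^ n * (-π * (n : ℝ) ^ 2) * Real.exp (-π * (n : ℝ) ^ 2 * x))
      = -2 * π * ∑' n : ℕ, (-1 : ℝ) ^ (n + 1) * ((n : ℝ) + 1) ^ 2 *
          Real.exp (-π * ((n : ℝ) + 1) ^ 2 * x) := by
  set f : ℤ → ℝ := fun n => (-1 : ℝ) ^ n * (-π * (n : ℝ) ^ 2) * Real.exp (-π * (n : ℝ) ^ 2 * x)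
    with hf
  have eB : (∑' n : ℕ, f ((n : ℕ) : ℤ)) = f (((0 : ℕ) : ℕ) : ℤ) + ∑' n : ℕ, f (((n + 1 : ℕ) : ℕ) : ℤ) :=
    Summable.tsum_eq_zero_add sA1
  have hf0 : f (((0 : ℕ) : ℕ) : ℤ) = 0 := by simp [hf]
  have eC : ∀ n : ℕ, f (((n + 1 : ℕ) : ℕ) : ℤ) =
      -π * ((-1 : ℝ) ^ (n + 1) * ((n : ℝ) + 1) ^ 2 * Real.exp (-π * ((n : ℝ) + 1) ^ 2 * x)) := by
    intro n
    simp only [hf, zpow_natCast]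
    push_cast
    ring_nf
  have eD : ∀ n : ℕ, f (-((n : ℤ) + 1)) =
      -π * ((-1 : ℝ) ^ (n + 1) * ((n : ℝ) + 1) ^ 2 * Real.exp (-π * ((n : ℝ) + 1) ^ 2 * x)) := by
    intro n
    simp only [hf]
    have hz : (-1 : ℝ) ^ (-((n : ℤ) + 1)) = (-1 : ℝ) ^ ((n : ℤ) + 1) := by
      rcases Int.even_or_odd ((n : ℤ) + 1) with h | h
      · rw [h.neg_one_zpow, (h.neg).neg_one_zpow]
      · rw [h.neg_one_zpow, (h.neg).neg_one_zpow]
    have hz2 : (-1 : ℝ) ^ ((n : ℤ) + 1) = (-1 : ℝ) ^ (n + 1) := by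
      rw [show ((n : ℤ) + 1) = (((n + 1 : ℕ) : ℤ)) by push_cast; ring, zpow_natCast]
    rw [hz, hz2]
    push_cast
    ring_nf
  have sA2 : Summable fun n : ℕ => f (-((n : ℤ) + 1)) :=
    (sum1.mul_left (-π)).congr fun n => (eD n).symm
  have eA : (∑' n : ℤ, f n) = (∑' n : ℕ, f ((n : ℕ) : ℤ)) + ∑' n : ℕ, f (-((n : ℤ) + 1)) :=
    tsum_of_nat_of_neg_add_one sA1 sA2
  calc (∑' n : ℤ, f n) = (∑' n : ℕ, f ((n : ℕ) : ℤ)) + ∑' n : ℕ, f (-((n : ℤ) + 1)) := eA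
    _ = (f (((0 : ℕ) : ℕ) : ℤ) + ∑' n : ℕ, f (((n + 1 : ℕ) : ℕ) : ℤ)) + ∑' n : ℕ, f (-((n : ℤ) + 1)) := by
        rw [eB]
    _ = (0 + ∑' n : ℕ, -π * ((-1 : ℝ) ^ (n + 1) * ((n : ℝ) + 1) ^ 2 *
          Real.exp (-π * ((n : ℝ) + 1) ^ 2 * x))) + ∑' n : ℕ, -π * ((-1 : ℝ) ^ (n + 1) *
          ((n : ℝ) + 1) ^ 2 * Real.exp (-π * ((n : ℝ) + 1) ^ 2 * x)) := by
        rw [hf0, tsum_congr eC, tsum_congr eD]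
    _ = _ := by rw [tsum_mul_left]; ring

theorem statement1 (x : ℝ) (hx : 0 < x) :
    Summable (fun n : ℕ => (-1 : ℝ) ^ (n + 1) * ((n : ℝ) + 1) ^ 2 *
        Real.exp (-π * ((n : ℝ) + 1) ^ 2 * x)) ∧
    Summable (fun n : ℕ => ((2 * (n : ℝ) + 1) ^ 2 * π - 2 * x) *
        Real.exp (-(π / (4 * x)) * (2 * (n : ℝ) + 1) ^ 2)) ∧
    -2 * π * ∑' n : ℕ, (-1 : ℝ) ^ (n + 1) * ((n : ℝ) + 1) ^ 2 *
        Real.exp (-π * ((n : ℝ) + 1) ^ 2 * x) =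
      (1 / (2 * x ^ ((5 : ℝ) / 2))) *
        ∑' n : ℕ, ((2 * (n : ℝ) + 1) ^ 2 * π - 2 * x) *
          Real.exp (-(π / (4 * x)) * (2 * (n : ℝ) + 1) ^ 2) := by
  have hc4 : 0 < π / (4 * x) := by positivity
  have hcx : 0 < π * x := by positivity
  have exple1 : ∀ n : ℕ, Real.exp (-π * ((n : ℝ) + 1) ^ 2 * x) ≤
      Real.exp (-(π * x) * ((n : ℝ) + 1)) := by
    intro n
    apply Real.exp_le_exp.mpr
    nlinarith [pi_pos, sq_nonneg ((n : ℝ)), Nat.cast_nonneg (α := ℝ) n]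
  have exple2 : ∀ n : ℕ, Real.exp (-(π / (4 * x)) * (2 * (n : ℝ) + 1) ^ 2) ≤
      Real.exp (-(π / (4 * x)) * ((n : ℝ) + 1)) := by
    intro n
    apply Real.exp_le_exp.mpr
    have : ((n : ℝ) + 1) ≤ (2 * (n : ℝ) + 1) ^ 2 := by
      nlinarith [Nat.cast_nonneg (α := ℝ) n]
    nlinarith [hc4]
  -- Summability 1
  have sum1 : Summable (fun n : ℕ => (-1 : ℝ) ^ (n + 1) * ((n : ℝ) + 1) ^ 2 *
      Real.exp (-π * ((n : ℝ) + 1) ^ 2 * x)) := by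
    apply Summable.of_norm
    refine (aux_sumN hcx 2).of_nonneg_of_le (fun n => norm_nonneg _) fun n => ?_
    rw [Real.norm_eq_abs, abs_mul, abs_mul, abs_pow, abs_neg, abs_one, one_pow, one_mul,
      Real.abs_exp, abs_of_nonneg (by positivity : (0:ℝ) ≤ ((n:ℝ)+1)^2)]
    exact mul_le_mul_of_nonneg_left (exple1 n) (by positivity)
  -- Summability 2
  have sum2 : Summable (fun n : ℕ => ((2 * (n : ℝ) + 1) ^ 2 * π - 2 * x) *
      Real.exp (-(π / (4 * x)) * (2 * (n : ℝ) + 1) ^ 2)) := by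
    apply Summable.of_norm
    refine ((aux_sumN hc4 2).mul_left (4 * π + 2 * x)).of_nonneg_of_le
      (fun n => norm_nonneg _) fun n => ?_
    rw [Real.norm_eq_abs, abs_mul, Real.abs_exp, ← mul_assoc]
    have h1 : |(2 * (n : ℝ) + 1) ^ 2 * π - 2 * x| ≤ (4 * π + 2 * x) * ((n : ℝ) + 1) ^ 2 := by
      have h2 : (2 * (n : ℝ) + 1) ^ 2 ≤ 4 * ((n : ℝ) + 1) ^ 2 := by
        nlinarith [Nat.cast_nonneg (α := ℝ) n]
      have h3 : (1 : ℝ) ≤ ((n : ℝ) + 1) ^ 2 := by nlinarith [Nat.cast_nonneg (α := ℝ) n]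
      refine (abs_sub _ _).trans ?_
      rw [abs_of_nonneg (by positivity : (0:ℝ) ≤ 2 * x),
        abs_of_nonneg (by positivity : (0:ℝ) ≤ (2 * (n : ℝ) + 1) ^ 2 * π)]
      nlinarith [pi_pos, hx]
    calc |(2 * (n : ℝ) + 1) ^ 2 * π - 2 * x| * Real.exp (-(π / (4 * x)) * (2 * (n : ℝ) + 1) ^ 2)
        ≤ ((4 * π + 2 * x) * ((n : ℝ) + 1) ^ 2) * Real.exp (-(π / (4 * x)) * ((n : ℝ) + 1)) :=
          mul_le_mul h1 (exple2 n) (Real.exp_pos _).le (by positivity)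
      _ = _ := by ring
  refine ⟨sum1, sum2, ?_⟩
  -- derivatives
  have dR : HasDerivAt (fun y : ℝ => y ^ (-(1 / 2) : ℝ))
      ((-(1 / 2) : ℝ) * x ^ ((-(1 / 2) : ℝ) - 1)) x :=
    Real.hasDerivAt_rpow_const (Or.inl hx.ne')
  have dG := dR.mul (hasDerivH hx)
  have hFG : (fun y : ℝ => ∑' n : ℤ, (-1 : ℝ) ^ n * Real.exp (-π * (n : ℝ) ^ 2 * y)) =ᶠ[nhds x]
      (fun y : ℝ => y ^ (-(1 / 2) : ℝ) * ∑' n : ℤ, Real.exp (-π * ((n : ℝ) + 1 / 2) ^ 2 / y)) := by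
    filter_upwards [Ioi_mem_nhds hx] with y hy
    exact FG hy
  have keyEq := (hasDerivF hx).unique (dG.congr_of_eventuallyEq hFG)
  -- summabilities over ℕ
  have sA1 : Summable fun n : ℕ =>
      (-1 : ℝ) ^ ((n : ℕ) : ℤ) * (-π * (((n : ℕ) : ℤ) : ℝ) ^ 2) *
        Real.exp (-π * (((n : ℕ) : ℤ) : ℝ) ^ 2 * x) := by
    apply Summable.of_norm
    refine ((aux_sumN hcx 2).mul_left (π * Real.exp (π * x))).of_nonneg_of_le
      (fun n => norm_nonneg _) fun n => ?_
    simp only [Int.cast_natCast]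
    rw [Real.norm_eq_abs, abs_mul, abs_mul, Real.abs_exp]
    have h1 : |(-1 : ℝ) ^ ((n : ℕ) : ℤ)| = 1 := by
      rw [zpow_natCast, abs_pow, abs_neg, abs_one, one_pow]
    rw [h1, one_mul, abs_mul, abs_neg, abs_of_pos pi_pos,
      abs_of_nonneg (by positivity : (0:ℝ) ≤ ((n:ℝ))^2)]
    have hnn : (n : ℝ) ≤ (n : ℝ) ^ 2 := by
      rcases Nat.eq_zero_or_pos n with rfl | h
      · simp
      · have h1 : (1 : ℝ) ≤ (n : ℝ) := by exact_mod_cast h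
        nlinarith
    have h2 : Real.exp (-π * ((n : ℝ)) ^ 2 * x) ≤
        Real.exp (π * x) * Real.exp (-(π * x) * ((n : ℝ) + 1)) := by
      rw [← Real.exp_add]
      apply Real.exp_le_exp.mpr
      nlinarith [mul_le_mul_of_nonneg_left hnn hcx.le]
    have h3 : ((n : ℝ)) ^ 2 ≤ ((n : ℝ) + 1) ^ 2 := by
      nlinarith [Nat.cast_nonneg (α := ℝ) n]
    calc π * ((n : ℝ)) ^ 2 * Real.exp (-π * ((n : ℝ)) ^ 2 * x)
        ≤ π * ((n : ℝ) + 1) ^ 2 * (Real.exp (π * x) * Real.exp (-(π * x) * ((n : ℝ) + 1))) :=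
          mul_le_mul (mul_le_mul_of_nonneg_left h3 pi_pos.le) h2 (Real.exp_pos _).le
            (by positivity)
      _ = _ := by ring
  have sH : Summable fun n : ℕ => Real.exp (-(π / (4 * x)) * (2 * (n : ℝ) + 1) ^ 2) := by
    refine (aux_sumN hc4 0).of_nonneg_of_le (fun n => (Real.exp_pos _).le) fun n => ?_
    rw [pow_zero, one_mul]
    exact exple2 n
  have sU : Summable fun n : ℕ =>
      π * (2 * (n : ℝ) + 1) ^ 2 * Real.exp (-(π / (4 * x)) * (2 * (n : ℝ) + 1) ^ 2) := by
    refine ((aux_sumN hc4 2).mul_left (4 * π)).of_nonneg_of_le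
      (fun n => by positivity) fun n => ?_
    have h2 : (2 * (n : ℝ) + 1) ^ 2 ≤ 4 * ((n : ℝ) + 1) ^ 2 := by
      nlinarith [Nat.cast_nonneg (α := ℝ) n]
    calc π * (2 * (n : ℝ) + 1) ^ 2 * Real.exp (-(π / (4 * x)) * (2 * (n : ℝ) + 1) ^ 2)
        ≤ (π * (4 * ((n : ℝ) + 1) ^ 2)) * Real.exp (-(π / (4 * x)) * ((n : ℝ) + 1)) :=
          mul_le_mul (mul_le_mul_of_nonneg_left h2 pi_pos.le) (exple2 n) (Real.exp_pos _).le
            (by positivity)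
      _ = _ := by ring
  -- rewrite everything
  rw [convA sum1 sA1] at keyEq
  rw [convH hx sH, convB hx sU] at keyEq
  -- split the RHS sum of the goal
  have rhsEq : (∑' n : ℕ, ((2 * (n : ℝ) + 1) ^ 2 * π - 2 * x) *
      Real.exp (-(π / (4 * x)) * (2 * (n : ℝ) + 1) ^ 2))
      = (∑' n : ℕ, π * (2 * (n : ℝ) + 1) ^ 2 *
          Real.exp (-(π / (4 * x)) * (2 * (n : ℝ) + 1) ^ 2))
        - 2 * x * ∑' n : ℕ, Real.exp (-(π / (4 * x)) * (2 * (n : ℝ) + 1) ^ 2) := by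
    rw [← tsum_mul_left, ← Summable.tsum_sub sU (sH.mul_left (2 * x))]
    exact tsum_congr fun n => by ring
  rw [rhsEq, keyEq]
  -- pure rpow algebra
  set T0 := ∑' n : ℕ, Real.exp (-(π / (4 * x)) * (2 * (n : ℝ) + 1) ^ 2)
  set U := ∑' n : ℕ, π * (2 * (n : ℝ) + 1) ^ 2 *
    Real.exp (-(π / (4 * x)) * (2 * (n : ℝ) + 1) ^ 2)
  have hs : 0 < x ^ ((1 : ℝ) / 2) := Real.rpow_pos_of_pos hx _
  have em : x ^ (-(1 / 2) : ℝ) = 1 / x ^ ((1 : ℝ) / 2) := by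
    rw [Real.rpow_neg hx.le]
    exact (one_div _).symm
  have e32 : x ^ ((-(1 / 2) : ℝ) - 1) = 1 / (x ^ ((1 : ℝ) / 2) * x) := by
    rw [show ((-(1 / 2) : ℝ) - 1) = -((1 : ℝ) / 2 + 1) by ring, Real.rpow_neg hx.le,
      Real.rpow_add hx, Real.rpow_one]
    exact (one_div _).symm
  have e5 : x ^ ((5 : ℝ) / 2) = x ^ ((1 : ℝ) / 2) * x ^ 2 := by
    rw [show ((5 : ℝ) / 2) = (1 : ℝ) / 2 + ((2 : ℕ) : ℝ) by norm_num, Real.rpow_add hx,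
      Real.rpow_natCast]
  rw [em, e32, e5]
  field_simp
  ring
end

section
/- For every real τ with 0 < τ ≤ 1/4, there exists exactly one complex number z satisfying |z − iτ/2| < τ/10 and P(z,τ) = 0. -/
open Real Complex

noncomputable def Ppoly (τ : ℝ) (z : ℂ) : ℂ :=
  z ^ 3 + (Complex.I - 1 / (4 * (π : ℂ)) - Complex.I / (τ : ℂ) ^ 2) * z ^ 2
    - z / 4 - Complex.I / 4

/-- Auxiliary cubic. -/
noncomputable def Qp (z : ℂ) : ℂ :=
  -Complex.I * z ^ 3 + (1 + Complex.I / (4 * (π : ℂ))) * z ^ 2 + Complex.I * z / 4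

/-- The fixed point map. -/
noncomputable def Fm (τ : ℝ) (z : ℂ) : ℂ :=
  Complex.I * τ / 2 + (τ : ℂ) ^ 2 * Qp z / (z + Complex.I * τ / 2)

lemma coeff_bound : Norm.norm (1 + Complex.I / (4 * (π : ℂ))) ≤ 13 / 12 := by
  have h3 : (3:ℝ) ≤ π := Real.pi_gt_three.le
  have h4 : Norm.norm (Complex.I / (4 * (π : ℂ))) = 1 / (4 * π) := by
    rw [norm_div, Complex.norm_I,
      show (4 * (π:ℂ)) = ((4*π : ℝ):ℂ) by push_cast; ring, Complex.norm_real, Real.norm_eq_abs,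
      abs_of_pos (by positivity)]
  calc Norm.norm (1 + Complex.I / (4 * (π : ℂ)))
      ≤ Norm.norm (1:ℂ) + Norm.norm (Complex.I / (4 * (π : ℂ))) := norm_add_le _ _
    _ = 1 + 1 / (4 * π) := by rw [norm_one, h4]
    _ ≤ 13 / 12 := by
        have : 1 / (4 * π) ≤ 1/12 := by
          rw [div_le_div_iff₀ (by positivity) (by norm_num)]
          nlinarith
        linarith

lemma key_identity (τ : ℝ) (hτ0 : 0 < τ) (z : ℂ) :
    (z - Complex.I * τ / 2) * (z + Complex.I * τ / 2) - (τ : ℂ) ^ 2 * Qp z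
      = Complex.I * (τ : ℂ) ^ 2 * Ppoly τ z := by
  have hτ : (τ : ℂ) ≠ 0 := Complex.ofReal_ne_zero.2 hτ0.ne'
  have hτ2 : ((τ : ℂ))^2 ≠ 0 := pow_ne_zero _ hτ
  have hπ : (π : ℂ) ≠ 0 := Complex.ofReal_ne_zero.2 Real.pi_ne_zero
  have hπ4 : (4 * (π : ℂ)) ≠ 0 := by simp [hπ]
  have hI : Complex.I ^ 2 = -1 := Complex.I_sq
  simp only [Ppoly, Qp]
  field_simp [hτ2, hπ4]
  ring_nf
  rw [hI]
  ring

lemma Qp_bound (τ : ℝ) (hτ0 : 0 < τ) (hτ : τ ≤ 1/4) (z : ℂ)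
    (hz : Norm.norm z ≤ 3 * τ / 5) : Norm.norm (Qp z) ≤ 27/100 * τ := by
  have h1 : Norm.norm (Qp z)
      ≤ Norm.norm z ^ 3 + (13/12) * Norm.norm z ^ 2 + Norm.norm z / 4 := by
    have t1 : Norm.norm (-Complex.I * z ^ 3) = Norm.norm z ^ 3 := by
      simp [norm_mul, norm_pow]
    have t2 : Norm.norm ((1 + Complex.I / (4 * (π : ℂ))) * z ^ 2)
        ≤ (13/12) * Norm.norm z ^ 2 := by
      rw [norm_mul, norm_pow]
      exact mul_le_mul_of_nonneg_right coeff_bound (by positivity)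
    have t3 : Norm.norm (Complex.I * z / 4) = Norm.norm z / 4 := by
      rw [norm_div, norm_mul, Complex.norm_I, one_mul]
      norm_num
    calc Norm.norm (Qp z)
        ≤ Norm.norm (-Complex.I * z ^ 3 + (1 + Complex.I / (4 * (π : ℂ))) * z ^ 2)
          + Norm.norm (Complex.I * z / 4) := norm_add_le _ _
      _ ≤ Norm.norm (-Complex.I * z ^ 3)
          + Norm.norm ((1 + Complex.I / (4 * (π : ℂ))) * z ^ 2)
          + Norm.norm (Complex.I * z / 4) := by
            have := norm_add_le (-Complex.I * z ^ 3)
              ((1 + Complex.I / (4 * (π : ℂ))) * z ^ 2)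
            linarith
      _ ≤ _ := by rw [t1, t3]; linarith
  have hz0 : 0 ≤ Norm.norm z := norm_nonneg z
  nlinarith [pow_le_pow_left₀ hz0 hz 3, pow_le_pow_left₀ hz0 hz 2, sq_nonneg τ,
    mul_pos hτ0 hτ0]

lemma Qp_lip (τ : ℝ) (hτ0 : 0 < τ) (hτ : τ ≤ 1/4) (z w : ℂ)
    (hz : Norm.norm z ≤ 3 * τ / 5) (hw : Norm.norm w ≤ 3 * τ / 5) :
    Norm.norm (Qp z - Qp w) ≤ 13/20 * Norm.norm (z - w) := by
  have hfac : Qp z - Qp w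
      = (z - w) * (-Complex.I * (z^2 + z*w + w^2) + (1 + Complex.I / (4 * (π : ℂ))) * (z + w)
          + Complex.I / 4) := by
    simp only [Qp]; ring
  rw [hfac, norm_mul]
  rw [mul_comm]
  apply mul_le_mul_of_nonneg_right _ (norm_nonneg _)
  have hz0 : 0 ≤ Norm.norm z := norm_nonneg z
  have hw0 : 0 ≤ Norm.norm w := norm_nonneg w
  have b1 : Norm.norm (-Complex.I * (z^2 + z*w + w^2))
      ≤ Norm.norm z ^2 + Norm.norm z * Norm.norm w + Norm.norm w ^2 := by
    rw [norm_mul]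
    simp only [norm_neg, Complex.norm_I, one_mul]
    calc Norm.norm (z^2 + z*w + w^2)
        ≤ Norm.norm (z^2 + z*w) + Norm.norm (w^2) := norm_add_le _ _
      _ ≤ Norm.norm (z^2) + Norm.norm (z*w) + Norm.norm (w^2) := by
          have := norm_add_le (z^2) (z*w); linarith
      _ = _ := by rw [norm_pow, norm_pow, norm_mul]
  have b2 : Norm.norm ((1 + Complex.I / (4 * (π : ℂ))) * (z + w))
      ≤ 13/12 * (Norm.norm z + Norm.norm w) := by
    rw [norm_mul]
    have := norm_add_le z w
    have h0 : (0:ℝ) ≤ Norm.norm (z + w) := norm_nonneg _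
    calc Norm.norm (1 + Complex.I / (4 * (π : ℂ))) * Norm.norm (z + w)
        ≤ 13/12 * Norm.norm (z + w) := mul_le_mul_of_nonneg_right coeff_bound h0
      _ ≤ _ := by linarith
  have b3 : Norm.norm (Complex.I / 4) = 1/4 := by
    rw [norm_div, Complex.norm_I]; norm_num
  calc Norm.norm (-Complex.I * (z^2 + z*w + w^2) + (1 + Complex.I / (4 * (π : ℂ))) * (z + w)
          + Complex.I / 4)
      ≤ Norm.norm (-Complex.I * (z^2 + z*w + w^2))
        + Norm.norm ((1 + Complex.I / (4 * (π : ℂ))) * (z + w))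
        + Norm.norm (Complex.I / 4) := by
          have h1 := norm_add_le (-Complex.I * (z^2 + z*w + w^2)
            + (1 + Complex.I / (4 * (π : ℂ))) * (z + w)) (Complex.I / 4)
          have h2 := norm_add_le (-Complex.I * (z^2 + z*w + w^2))
            ((1 + Complex.I / (4 * (π : ℂ))) * (z + w))
          linarith
    _ ≤ 13/20 := by
        rw [b3]
        nlinarith [mul_le_mul hz hw hw0 (by linarith), pow_le_pow_left₀ hz0 hz 2,
          pow_le_pow_left₀ hw0 hw 2]

theorem statement5 (τ : ℝ) (hτ0 : 0 < τ) (hτ : τ ≤ 1 / 4) :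
    ∃! z : ℂ, ‖z - Complex.I * (τ : ℂ) / 2‖ < τ / 10 ∧ Ppoly τ z = 0 := by
  set a : ℂ := Complex.I * τ / 2 with ha
  have hτc : (τ : ℂ) ≠ 0 := Complex.ofReal_ne_zero.2 hτ0.ne'
  have habs_a : Norm.norm a = τ / 2 := by
    rw [ha, norm_div, norm_mul, Complex.norm_I, Complex.norm_real, Real.norm_eq_abs, abs_of_pos hτ0, one_mul]
    norm_num
  -- basic facts for points in the closed ball
  have habs_z : ∀ z : ℂ, Norm.norm (z - a) ≤ τ/10 → Norm.norm z ≤ 3 * τ / 5 := by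
    intro z hz
    have := norm_add_le (z - a) a
    simp only [sub_add_cancel] at this
    linarith
  have hden_lb : ∀ z : ℂ, Norm.norm (z - a) ≤ τ/10 → 9*τ/10 ≤ Norm.norm (z + a) := by
    intro z hz
    have h2a : Norm.norm (a + a) = τ := by
      rw [show a + a = Complex.I * τ by rw [ha]; ring, norm_mul, Complex.norm_I,
        Complex.norm_real, Real.norm_eq_abs, abs_of_pos hτ0, one_mul]
    have := norm_add_le (z + a) (a - z)
    rw [show z + a + (a - z) = a + a by ring] at this
    rw [show a - z = -(z - a) by ring, norm_neg] at this
    rw [h2a] at this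
    linarith
  have hden_ne : ∀ z : ℂ, Norm.norm (z - a) ≤ τ/10 → z + a ≠ 0 := by
    intro z hz h0
    have := hden_lb z hz
    rw [h0, norm_zero] at this
    linarith
  have hden_ub : ∀ z : ℂ, Norm.norm (z - a) ≤ τ/10 → Norm.norm (z + a) ≤ 11*τ/10 := by
    intro z hz
    have := norm_add_le (z - a) (a + a)
    rw [show z - a + (a + a) = z + a by ring] at this
    have h2a : Norm.norm (a + a) = τ := by
      rw [show a + a = Complex.I * τ by rw [ha]; ring, norm_mul, Complex.norm_I,
        Complex.norm_real, Real.norm_eq_abs, abs_of_pos hτ0, one_mul]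
    rw [h2a] at this
    linarith
  -- equivalence between roots and fixed points
  have hiff : ∀ z : ℂ, Norm.norm (z - a) ≤ τ/10 → (Ppoly τ z = 0 ↔ Fm τ z = z) := by
    intro z hz
    have hne := hden_ne z hz
    have hid := key_identity τ hτ0 z
    constructor
    · intro h
      rw [h, mul_zero, sub_eq_zero] at hid
      rw [← ha] at hid
      have h2 : (τ : ℂ) ^ 2 * Qp z / (z + a) = z - a := by
        rw [div_eq_iff hne]; linear_combination hid.symm
      rw [Fm, ← ha, h2]; ring
    · intro h
      rw [Fm, ← ha] at h
      have h2 : (τ : ℂ) ^ 2 * Qp z / (z + a) = z - a := by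
        linear_combination h
      rw [div_eq_iff hne] at h2
      have h3 : Complex.I * (τ : ℂ) ^ 2 * Ppoly τ z = 0 := by
        rw [← hid, ← ha, h2]; ring
      rcases mul_eq_zero.1 h3 with h4 | h4
      · exfalso
        rcases mul_eq_zero.1 h4 with h5 | h5
        · exact Complex.I_ne_zero h5
        · exact pow_ne_zero 2 hτc h5
      · exact h4
  -- self-map bound
  have hself : ∀ z : ℂ, Norm.norm (z - a) ≤ τ/10 →
      Norm.norm (Fm τ z - a) ≤ 3/40 * τ := by
    intro z hz
    have h1 : Fm τ z - a = (τ : ℂ) ^ 2 * Qp z / (z + a) := by rw [Fm, ← ha]; ring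
    rw [h1, norm_div, norm_mul]
    have hq := Qp_bound τ hτ0 hτ z (habs_z z hz)
    have hlb := hden_lb z hz
    have habs_τ2 : Norm.norm ((τ : ℂ)^2) = τ^2 := by
      rw [norm_pow, Complex.norm_real, Real.norm_eq_abs, abs_of_pos hτ0]
    rw [habs_τ2]
    rw [div_le_iff₀ (by linarith)]
    have hq0 : 0 ≤ Norm.norm (Qp z) := norm_nonneg _
    nlinarith [sq_nonneg τ, mul_pos hτ0 hτ0]
  -- contraction bound
  have hlip : ∀ z w : ℂ, Norm.norm (z - a) ≤ τ/10 → Norm.norm (w - a) ≤ τ/10 →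
      Norm.norm (Fm τ z - Fm τ w) ≤ 1/3 * Norm.norm (z - w) := by
    intro z w hz hw
    have hnez := hden_ne z hz
    have hnew := hden_ne w hw
    have h1 : Fm τ z - Fm τ w
        = (τ : ℂ)^2 * ((Qp z - Qp w) * (w + a) - Qp w * (z - w)) / ((z + a) * (w + a)) := by
      rw [Fm, Fm, ← ha]
      field_simp
      ring
    rw [h1, norm_div, norm_mul, norm_mul]
    have habs_τ2 : Norm.norm ((τ : ℂ)^2) = τ^2 := by
      rw [norm_pow, Complex.norm_real, Real.norm_eq_abs, abs_of_pos hτ0]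
    rw [habs_τ2]
    have hlbz := hden_lb z hz
    have hlbw := hden_lb w hw
    have hubw := hden_ub w hw
    have hql := Qp_lip τ hτ0 hτ z w (habs_z z hz) (habs_z w hw)
    have hqb := Qp_bound τ hτ0 hτ w (habs_z w hw)
    have hnum : Norm.norm ((Qp z - Qp w) * (w + a) - Qp w * (z - w))
        ≤ (13/20 * (11*τ/10) + 27/100 * τ) * Norm.norm (z - w) := by
      have t := norm_sub_le ((Qp z - Qp w) * (w + a)) (Qp w * (z - w))
      rw [norm_mul, norm_mul] at t
      have h0zw : 0 ≤ Norm.norm (z - w) := norm_nonneg _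
      have h0wa : 0 ≤ Norm.norm (w + a) := norm_nonneg _
      have h0q : 0 ≤ Norm.norm (Qp w) := norm_nonneg _
      have h0ql : 0 ≤ Norm.norm (Qp z - Qp w) := norm_nonneg _
      nlinarith
    have hden_pos : (0:ℝ) < Norm.norm (z + a) * Norm.norm (w + a) := by
      have := norm_pos_iff.2 hnez
      have := norm_pos_iff.2 hnew
      positivity
    rw [div_le_iff₀ hden_pos]
    have hzw0 : 0 ≤ Norm.norm (z - w) := norm_nonneg _
    have hnum0 : 0 ≤ Norm.norm ((Qp z - Qp w) * (w + a) - Qp w * (z - w)) :=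
      norm_nonneg _
    have hprod : (81/100) * τ^2 ≤ Norm.norm (z + a) * Norm.norm (w + a) := by
      nlinarith
    -- τ² · num ≤ (1/3)|z-w| · |z+a||w+a|
    have key : τ^2 * ((13/20 * (11*τ/10) + 27/100 * τ) * Norm.norm (z - w))
        ≤ 1/3 * Norm.norm (z - w) * ((81/100) * τ^2) := by
      rw [show τ^2 * ((13/20 * (11*τ/10) + 27/100 * τ) * Norm.norm (z - w))
          = (197/200) * τ * (τ^2 * Norm.norm (z - w)) by ring,
        show 1/3 * Norm.norm (z - w) * ((81/100) * τ^2)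
          = (27/100) * (τ^2 * Norm.norm (z - w)) by ring]
      have h1 : (0:ℝ) ≤ τ^2 * Norm.norm (z - w) := by positivity
      nlinarith
    calc τ^2 * Norm.norm ((Qp z - Qp w) * (w + a) - Qp w * (z - w))
        ≤ τ^2 * ((13/20 * (11*τ/10) + 27/100 * τ) * Norm.norm (z - w)) := by
          nlinarith [sq_nonneg τ]
      _ ≤ 1/3 * Norm.norm (z - w) * ((81/100) * τ^2) := key
      _ ≤ 1/3 * Norm.norm (z - w) * (Norm.norm (z + a) * Norm.norm (w + a)) := by
          nlinarith
  -- Banach fixed point on the closed ball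
  set s : Set ℂ := Metric.closedBall a (τ/10) with hs
  have hmem_iff : ∀ z : ℂ, z ∈ s ↔ Norm.norm (z - a) ≤ τ/10 := by
    intro z
    rw [hs, Metric.mem_closedBall, Complex.dist_eq]
  have hmaps : Set.MapsTo (Fm τ) s s := by
    intro z hz
    rw [hmem_iff] at hz ⊢
    have := hself z hz
    linarith
  have hcomplete : IsComplete s := Metric.isClosed_closedBall.isComplete
  have hcontr : ContractingWith (1/3 : NNReal) (hmaps.restrict (Fm τ) s s) := by
    constructor
    · rw [← NNReal.coe_lt_coe]; norm_num
    · apply LipschitzWith.of_dist_le_mul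
      rintro ⟨z, hz⟩ ⟨w, hw⟩
      rw [Subtype.dist_eq, Subtype.dist_eq]
      simp only [Set.MapsTo.val_restrict_apply]
      rw [Complex.dist_eq, Complex.dist_eq]
      have h13 : ((1/3 : NNReal) : ℝ) = 1/3 := by norm_num
      rw [h13]
      exact hlip z w ((hmem_iff z).1 hz) ((hmem_iff w).1 hw)
  have hamem : a ∈ s := Metric.mem_closedBall_self (by linarith)
  obtain ⟨y, hys, hyfix, -, -⟩ := ContractingWith.exists_fixedPoint' hcomplete hmaps hcontr
    hamem (edist_ne_top _ _)
  have hys' : Norm.norm (y - a) ≤ τ/10 := (hmem_iff y).1 hys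
  have hystrict : Norm.norm (y - a) < τ/10 := by
    have h1 : Fm τ y = y := hyfix
    have := hself y hys'
    rw [h1] at this
    linarith
  refine ⟨y, ⟨hystrict, (hiff y hys').2 hyfix⟩, ?_⟩
  rintro w ⟨hw1, hw2⟩
  have hw1' : Norm.norm (w - a) ≤ τ/10 := hw1.le
  have hwfix : Fm τ w = w := (hiff w hw1').1 hw2
  have hyfix' : Fm τ y = y := hyfix
  have := hlip w y hw1' hys'
  rw [hwfix, hyfix'] at this
  have h0 : Norm.norm (w - y) = 0 := by
    have h00 : 0 ≤ Norm.norm (w - y) := norm_nonneg _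
    linarith
  have := norm_eq_zero.1 h0
  exact sub_eq_zero.1 this
end

section
/- Let 0 < τ ≤ 1/4 and let q₂ be a complex number with |q₂ − iτ/2| < τ/10 and P(q₂,τ) = 0. Set q₂⁻ := q₂ − (τ/4)·e^{3πi/4}. Then 0 < |q₂⁻| ≤ 15τ/32 and 0 < arg(q₂⁻) ≤ arctan((24 − 5√2)/(5√2 − 4)) < π/2, where arg denotes the principal argument. -/
open Real Complex

theorem statement6 (τ : ℝ) (hτ0 : 0 < τ) (hτ : τ ≤ 1 / 4) (q₂ : ℂ)
    (hq₂ : ‖q₂ - Complex.I * (τ : ℂ) / 2‖ < τ / 10)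
    (hroot : Ppoly τ q₂ = 0) :
    0 < ‖q₂ - ((τ : ℂ) / 4) * Complex.exp (3 * (π : ℂ) * Complex.I / 4)‖ ∧
    ‖q₂ - ((τ : ℂ) / 4) * Complex.exp (3 * (π : ℂ) * Complex.I / 4)‖ ≤ 15 * τ / 32 ∧
    0 < Complex.arg (q₂ - ((τ : ℂ) / 4) * Complex.exp (3 * (π : ℂ) * Complex.I / 4)) ∧
    Complex.arg (q₂ - ((τ : ℂ) / 4) * Complex.exp (3 * (π : ℂ) * Complex.I / 4)) ≤
      Real.arctan ((24 - 5 * Real.sqrt 2) / (5 * Real.sqrt 2 - 4)) ∧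
    Real.arctan ((24 - 5 * Real.sqrt 2) / (5 * Real.sqrt 2 - 4)) < π / 2 := by
  clear hroot
  set s : ℝ := Real.sqrt 2 with hs
  have hs2 : s ^ 2 = 2 := Real.sq_sqrt (by norm_num)
  have hs0 : 0 ≤ s := Real.sqrt_nonneg 2
  have hsl : (1.414 : ℝ) ≤ s := by nlinarith
  have hsu : s ≤ (1.4143 : ℝ) := by nlinarith
  -- compute the exponential
  have hexp : Complex.exp (3 * (π : ℂ) * Complex.I / 4)
      = ((-(s / 2) : ℝ) : ℂ) + ((s / 2 : ℝ) : ℂ) * Complex.I := by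
    have h1 : 3 * (π : ℂ) * Complex.I / 4 = ((3 * π / 4 : ℝ) : ℂ) * Complex.I := by
      push_cast; ring
    rw [h1, Complex.exp_mul_I, ← Complex.ofReal_cos, ← Complex.ofReal_sin]
    have hc : Real.cos (3 * π / 4) = -(s / 2) := by
      rw [show (3 * π / 4 : ℝ) = π - π / 4 by ring, Real.cos_pi_sub, Real.cos_pi_div_four]
    have hsn : Real.sin (3 * π / 4) = s / 2 := by
      rw [show (3 * π / 4 : ℝ) = π - π / 4 by ring, Real.sin_pi_sub, Real.sin_pi_div_four]
    rw [hc, hsn]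
  set z : ℂ := q₂ - ((τ : ℂ) / 4) * Complex.exp (3 * (π : ℂ) * Complex.I / 4) with hz
  have hzre : z.re = q₂.re + τ * s / 8 := by
    rw [hz, hexp]; simp; ring
  have hzim : z.im = q₂.im - τ * s / 8 := by
    rw [hz, hexp]; simp; ring
  -- bounds on q₂.re and q₂.im
  have hre : |q₂.re| < τ / 10 := by
    have h := Complex.abs_re_le_norm (q₂ - Complex.I * (τ : ℂ) / 2)
    simp only [Complex.sub_re, Complex.mul_re, Complex.I_re, Complex.I_im,
      Complex.ofReal_re, Complex.ofReal_im, Complex.div_re] at h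
    calc |q₂.re| = |(q₂ - Complex.I * (τ : ℂ) / 2).re| := by
          congr 1; simp
      _ ≤ ‖q₂ - Complex.I * (τ : ℂ) / 2‖ := Complex.abs_re_le_norm _
      _ < τ / 10 := hq₂
  have him : |q₂.im - τ / 2| < τ / 10 := by
    calc |q₂.im - τ / 2| = |(q₂ - Complex.I * (τ : ℂ) / 2).im| := by
          congr 1; simp
      _ ≤ ‖q₂ - Complex.I * (τ : ℂ) / 2‖ := Complex.abs_im_le_norm _
      _ < τ / 10 := hq₂
  rw [abs_lt] at hre him
  obtain ⟨hre1, hre2⟩ := hre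
  obtain ⟨him1, him2⟩ := him
  have hRe : 0 < z.re := by rw [hzre]; nlinarith
  have hIm : 0 < z.im := by rw [hzim]; nlinarith
  have hzne : z ≠ 0 := fun h => by simp [h] at hRe
  refine ⟨norm_pos_iff.mpr hzne, ?_, ?_, ?_, Real.arctan_lt_pi_div_two _⟩
  · -- |z| ≤ 15τ/32
    have hsplit : z = (q₂ - Complex.I * (τ : ℂ) / 2)
        + (Complex.I * (τ : ℂ) / 2 - ((τ : ℂ) / 4) * Complex.exp (3 * (π : ℂ) * Complex.I / 4)) := by
      rw [hz]; ring
    have hw : ‖Complex.I * (τ : ℂ) / 2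
        - ((τ : ℂ) / 4) * Complex.exp (3 * (π : ℂ) * Complex.I / 4)‖ ≤ 59 * τ / 160 := by
      set w := Complex.I * (τ : ℂ) / 2 - ((τ : ℂ) / 4) * Complex.exp (3 * (π : ℂ) * Complex.I / 4)
        with hwdef
      have hwre : w.re = τ * s / 8 := by rw [hwdef, hexp]; simp; ring
      have hwim : w.im = τ / 2 - τ * s / 8 := by rw [hwdef, hexp]; simp; ring
      have hns : Complex.normSq w ≤ (59 * τ / 160) ^ 2 := by
        rw [Complex.normSq_apply, hwre, hwim]; nlinarith
      calc ‖w‖ = Real.sqrt (Complex.normSq w) := Complex.norm_def _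
        _ ≤ Real.sqrt ((59 * τ / 160) ^ 2) := Real.sqrt_le_sqrt hns
        _ = 59 * τ / 160 := Real.sqrt_sq (by positivity)
    calc ‖z‖ ≤ ‖q₂ - Complex.I * (τ : ℂ) / 2‖
          + ‖Complex.I * (τ : ℂ) / 2
            - ((τ : ℂ) / 4) * Complex.exp (3 * (π : ℂ) * Complex.I / 4)‖ := by
          rw [hsplit]; exact norm_add_le _ _
      _ ≤ τ / 10 + 59 * τ / 160 := add_le_add hq₂.le hw
      _ ≤ 15 * τ / 32 := by linarith
  · -- 0 < arg z
    rcases lt_or_eq_of_le (Complex.arg_nonneg_iff.2 hIm.le) with h | h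
    · exact h
    · exfalso
      have := Complex.arg_eq_zero_iff.1 h.symm
      exact hIm.ne' this.2
  · -- arg z ≤ arctan R
    have harg : Complex.arg z = Real.arctan (z.im / z.re) := by
      rw [← Complex.tan_arg z, Real.arctan_tan]
      · exact (Complex.neg_pi_div_two_lt_arg_iff.2 (Or.inl hRe))
      · exact Complex.arg_lt_pi_div_two_iff.2 (Or.inl hRe)
    rw [harg]
    apply Real.arctan_strictMono.monotone
    rw [div_le_div_iff₀ hRe (by nlinarith : (0:ℝ) < 5 * s - 4)]
    rw [hzre, hzim]
    nlinarith
end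

section
/- For every real τ with 0 < τ ≤ 1/4, there exists exactly one complex number z satisfying |z − (i/τ^2 + 1/(4π) − i)| ≤ τ^2/2 and P(z,τ) = 0. -/
open Real Complex

set_option maxHeartbeats 2000000 in
theorem statement7 (τ : ℝ) (hτ0 : 0 < τ) (hτ : τ ≤ 1 / 4) :
    ∃! z : ℂ,
      ‖z - (Complex.I / (τ : ℂ) ^ 2 + 1 / (4 * (π : ℂ)) - Complex.I)‖ ≤ τ ^ 2 / 2 ∧
      Ppoly τ z = 0 := by
  have hπ : (0:ℝ) < π := Real.pi_pos
  have hπC : (π:ℂ) ≠ 0 := by exact_mod_cast hπ.ne'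
  set t : ℝ := τ^2 with ht_def
  have ht0 : 0 < t := by positivity
  have ht16 : t ≤ 1/16 := by nlinarith
  have hu16 : 16 ≤ 1/t := by rw [le_div_iff₀ ht0]; nlinarith
  have hut : t * (1/t) = 1 := by field_simp
  set c : ℂ := Complex.I / (τ:ℂ)^2 + 1/(4*(π:ℂ)) - Complex.I with hc_def
  have hτC : ((τ:ℂ))^2 = (t:ℂ) := by push_cast [ht_def]; ring
  have htC : (t:ℂ) ≠ 0 := by exact_mod_cast ht0.ne'
  have hc : c = ((1/(4*π):ℝ):ℂ) + ((1/t - 1 : ℝ):ℂ) * Complex.I := by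
    rw [hc_def, hτC]; push_cast; field_simp; ring
  have hcabs_ge : 1/t - 1 ≤ ‖c‖ := by
    have h1 : c.im = 1/t - 1 := by rw [hc]; simp
    calc 1/t - 1 ≤ |c.im| := by rw [h1]; exact le_abs_self _
    _ ≤ ‖c‖ := Complex.abs_im_le_norm c
  have hcabs_le : ‖c‖ ≤ 1/t := by
    have h1 : c.im = 1/t - 1 := by rw [hc]; simp
    have h2 : c.re = 1/(4*π) := by rw [hc]; simp
    have h3 : ‖c‖ ≤ |c.re| + |c.im| := Complex.norm_le_abs_re_add_abs_im c
    have h4 : |c.re| ≤ 1/(4*π) := by rw [h2, abs_of_pos (by positivity)]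
    have h5 : |c.im| = 1/t - 1 := by rw [h1, abs_of_pos (by linarith)]
    have h6 : 1/(4*π) ≤ 1 := by
      rw [div_le_one (by positivity)]; nlinarith [Real.pi_gt_three]
    linarith
  set S : Set ℂ := Metric.closedBall c (t/2) with hS_def
  have hball : ∀ z ∈ S, 1/t - 2 ≤ ‖z‖ ∧ ‖z‖ ≤ 1/t + 1 := by
    intro z hz
    rw [hS_def, Metric.mem_closedBall, Complex.dist_eq] at hz
    have h1 : ‖c‖ - ‖z‖ ≤ ‖z - c‖ := by
      have h0 := norm_sub_norm_le c z
      have h0' : ‖c - z‖ = ‖z - c‖ := norm_sub_rev c z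
      linarith
    have h2 : ‖z‖ - ‖c‖ ≤ ‖z - c‖ := by
      have := norm_sub_norm_le z c
      simpa using this
    constructor <;> nlinarith
  have hz0 : ∀ z ∈ S, z ≠ 0 := by
    intro z hz h0
    have := (hball z hz).1
    rw [h0, norm_zero] at this
    nlinarith
  set g : ℂ → ℂ := fun z => c + (z + Complex.I) / (4 * z^2) with hg_def
  clear_value t c S g
  have hmaps : Set.MapsTo g S S := by
    intro z hz
    obtain ⟨hm, hM⟩ := hball z hz
    have hs0 : (0:ℝ) < ‖z‖ := by nlinarith
    show g z ∈ S
    rw [hS_def, Metric.mem_closedBall, Complex.dist_eq, hg_def]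
    have he : c + (z + Complex.I) / (4 * z^2) - c = (z + Complex.I) / (4 * z^2) := by ring
    simp only []
    rw [he, norm_div, norm_mul, norm_pow]
    have h4 : ‖(4:ℂ)‖ = 4 := by simp
    rw [h4]
    have hden : (0:ℝ) < 4 * ‖z‖ ^ 2 := by positivity
    rw [div_le_iff₀ hden]
    have hnum : ‖z + Complex.I‖ ≤ ‖z‖ + 1 := by
      have := norm_add_le z Complex.I
      simpa using this
    have key : ‖z‖ + 1 ≤ t/2 * (4 * ‖z‖ ^ 2) := by
      nlinarith [mul_le_mul_of_nonneg_left hm ht0.le, sq_nonneg (‖z‖ - (1/t - 2))]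
    linarith
  have hlip : ∀ z ∈ S, ∀ w ∈ S, ‖g z - g w‖ ≤ 1/2 * ‖z - w‖ := by
    intro z hz w hw
    obtain ⟨hmz, hMz⟩ := hball z hz
    obtain ⟨hmw, hMw⟩ := hball w hw
    have hz' := hz0 z hz
    have hw' := hz0 w hw
    have hsz : (14:ℝ) ≤ ‖z‖ := by nlinarith
    have hsw : (14:ℝ) ≤ ‖w‖ := by nlinarith
    have hid : g z - g w = ((z - w) * (-(z*w) - Complex.I*(z+w))) / (4 * z^2 * w^2) := by
      rw [hg_def]; field_simp; ring
    rw [hid, norm_div, norm_mul]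
    have hden : ‖4 * z^2 * w^2‖ = 4 * ‖z‖ ^ 2 * ‖w‖ ^ 2 := by
      rw [norm_mul, norm_mul, norm_pow, norm_pow]; norm_num
    rw [hden]
    have hdenp : (0:ℝ) < 4 * ‖z‖ ^ 2 * ‖w‖ ^ 2 := by positivity
    rw [div_le_iff₀ hdenp]
    have hA : ‖-(z*w) - Complex.I*(z+w)‖ ≤
        ‖z‖ * ‖w‖ + (‖z‖ + ‖w‖) := by
      calc ‖-(z*w) - Complex.I*(z+w)‖
          ≤ ‖-(z*w)‖ + ‖Complex.I*(z+w)‖ := by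
            have := norm_sub_le (-(z*w)) (Complex.I*(z+w))
            simpa using this
        _ ≤ ‖z‖ * ‖w‖ + (‖z‖ + ‖w‖) := by
            rw [norm_neg, norm_mul, norm_mul]
            simp only [Complex.norm_I, one_mul]
            have := norm_add_le z w
            linarith
    have hab : (196:ℝ) ≤ ‖z‖ * ‖w‖ := by
      calc (196:ℝ) = 14 * 14 := by norm_num
      _ ≤ ‖z‖ * ‖w‖ := mul_le_mul hsz hsw (by norm_num) (by linarith)
    have haz : ‖z‖ ≤ ‖z‖ * ‖w‖ := by
      nlinarith [mul_nonneg (show (0:ℝ) ≤ ‖z‖ by linarith)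
        (show (0:ℝ) ≤ ‖w‖ - 1 by linarith)]
    have haw : ‖w‖ ≤ ‖z‖ * ‖w‖ := by
      nlinarith [mul_nonneg (show (0:ℝ) ≤ ‖w‖ by linarith)
        (show (0:ℝ) ≤ ‖z‖ - 1 by linarith)]
    have hsmall : ‖z‖ * ‖w‖ + (‖z‖ + ‖w‖) ≤
        1/2 * (4 * ‖z‖ ^ 2 * ‖w‖ ^ 2) := by
      nlinarith [mul_le_mul_of_nonneg_left hab
        (by linarith : (0:ℝ) ≤ ‖z‖ * ‖w‖)]
    nlinarith [norm_nonneg (z - w), norm_nonneg (-(z*w) - Complex.I*(z+w))]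
  -- fixed point iff root
  have hPc : ∀ z : ℂ, 4 * Ppoly τ z = 4*z^2*(z - c) - (z + Complex.I) := by
    intro z; simp only [Ppoly]; rw [hc_def]; ring
  have hkey : ∀ z : ℂ, z ≠ 0 → (Ppoly τ z = 0 ↔ g z = z) := by
    intro z hz
    have hz2 : (4:ℂ) * z^2 ≠ 0 := mul_ne_zero (by norm_num) (pow_ne_zero 2 hz)
    constructor
    · intro h
      have h5 : (z + Complex.I) / (4*z^2) = z - c := by
        rw [div_eq_iff hz2]; linear_combination hPc z - 4*h
      simp only [hg_def]
      rw [h5]; ring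
    · intro h
      simp only [hg_def] at h
      have h5 : (z + Complex.I) / (4*z^2) = z - c := by linear_combination h
      rw [div_eq_iff hz2] at h5
      linear_combination hPc z / 4 - h5 / 4
  -- contraction on the ball, Banach fixed point
  have hcomplete : IsComplete S := by rw [hS_def]; exact Metric.isClosed_closedBall.isComplete
  have hcontr : ContractingWith (1/2 : NNReal) (hmaps.restrict g S S) := by
    constructor
    · rw [← NNReal.coe_lt_coe]; norm_num
    · apply LipschitzWith.of_dist_le_mul
      rintro ⟨x, hx⟩ ⟨y, hy⟩
      simp only [Subtype.dist_eq, Set.MapsTo.val_restrict_apply, Complex.dist_eq]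
      have := hlip x hx y hy
      have hK : ((1/2 : NNReal) : ℝ) = 1/2 := by norm_num
      rw [hK]
      exact this
  have hcmem : c ∈ S := by rw [hS_def]; exact Metric.mem_closedBall_self (by positivity)
  obtain ⟨z₀, hz₀S, hz₀fix, -, -⟩ :=
    hcontr.exists_fixedPoint' hcomplete hmaps hcmem (edist_ne_top c (g c))
  refine ⟨z₀, ⟨?_, ?_⟩, ?_⟩
  · have h := hz₀S
    rw [hS_def, Metric.mem_closedBall, Complex.dist_eq] at h
    exact h
  · exact (hkey z₀ (hz0 z₀ hz₀S)).mpr hz₀fix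
  · rintro y ⟨hy1, hy2⟩
    have hyS : y ∈ S := by
      rw [hS_def, Metric.mem_closedBall, Complex.dist_eq]
      exact hy1
    have hyfix : g y = y := (hkey y (hz0 y hyS)).mp hy2
    have hd := hlip y hyS z₀ hz₀S
    rw [hyfix, hz₀fix] at hd
    have h0 : ‖y - z₀‖ = 0 := by
      nlinarith [norm_nonneg (y - z₀)]
    exact sub_eq_zero.mp (norm_eq_zero.mp h0)
end

section
/- For every ε > 0 there exists τ₀ ∈ (0, 1/4] such that for all τ ∈ (0, τ₀): 1 − ε < τ^2·|q₁(τ)| ≤ 1 and 1 ≤ (2/τ)·|q₂(τ)| ≤ 1 + ε. -/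
open Real Complex

set_option maxHeartbeats 1000000

lemma key_ident (τ : ℝ) (hτ : τ ≠ 0) (w : ℂ) :
    (-4 * Complex.I) * Ppoly τ (Complex.I * τ * w / 2)
      = (w ^ 2 - 1) - ((τ : ℂ) * w / 2 + (τ : ℂ) ^ 2 * w ^ 2 * (1 + Complex.I / (4 * (π : ℂ)))
          + (τ : ℂ) ^ 3 * w ^ 3 / 2) := by
  have hτ' : (τ : ℂ) ^ 2 ≠ 0 := pow_ne_zero _ (by exact_mod_cast hτ)
  have hu : (Complex.I / (τ : ℂ) ^ 2) * (τ : ℂ) ^ 2 = Complex.I :=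
    div_mul_cancel₀ _ hτ'
  unfold Ppoly
  linear_combination
    (((Complex.I ^ 2 - 1) * (-(τ:ℂ)^3 * w^3 / 2 - (τ:ℂ)^2 * w^2 + w^2)
      + Complex.I * (τ:ℂ)^2 * w^2 * (1 / (4 * (π:ℂ))) + (τ:ℂ) * w / 2 + 1) * Complex.I_sq)
    + (Complex.I ^ 3 * w ^ 2) * hu

theorem statement8 (ε : ℝ) (hε : 0 < ε) :
    ∃ τ₀ : ℝ, 0 < τ₀ ∧ τ₀ ≤ 1 / 4 ∧
      ∀ τ : ℝ, 0 < τ → τ < τ₀ →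
        ∀ q₁ q₂ : ℂ,
          (‖q₁ - (Complex.I / (τ : ℂ) ^ 2 + 1 / (4 * (π : ℂ)) - Complex.I)‖
              ≤ τ ^ 2 / 2 ∧ Ppoly τ q₁ = 0) →
          (‖q₂ - Complex.I * (τ : ℂ) / 2‖ < τ / 10 ∧ Ppoly τ q₂ = 0) →
          (1 - ε < τ ^ 2 * ‖q₁‖ ∧ τ ^ 2 * ‖q₁‖ ≤ 1 ∧
            1 ≤ (2 / τ) * ‖q₂‖ ∧ (2 / τ) * ‖q₂‖ ≤ 1 + ε) := by
  refine ⟨min ε (1/10), lt_min hε (by norm_num), (min_le_right _ _).trans (by norm_num), ?_⟩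
  intro τ hτ0 hττ₀ q₁ q₂ ⟨h1, _⟩ ⟨h2a, h2b⟩
  have hτε : τ < ε := hττ₀.trans_le (min_le_left _ _)
  have hτs : τ < 1/10 := hττ₀.trans_le (min_le_right _ _)
  have hτne : τ ≠ 0 := ne_of_gt hτ0
  have hτ2 : τ^2 < 1/100 := by nlinarith
  have hπ3 : (3 : ℝ) < π := Real.pi_gt_three
  have hπpos : (0:ℝ) < π := by linarith
  -- ## Part A : q₁ bounds
  set c : ℂ := Complex.I / (τ : ℂ) ^ 2 + 1 / (4 * (π : ℂ)) - Complex.I with hc_def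
  have hc : c = ((1/(4*π) : ℝ) : ℂ) + ((1/τ^2 - 1 : ℝ) : ℂ) * Complex.I := by
    rw [hc_def]
    have hτ' : (τ : ℂ) ^ 2 ≠ 0 := pow_ne_zero _ (by exact_mod_cast hτne)
    have hπ' : (π : ℂ) ≠ 0 := by exact_mod_cast Real.pi_ne_zero
    push_cast
    field_simp
    ring
  have habsc : ‖c‖ = Real.sqrt ((1/(4*π))^2 + (1/τ^2 - 1)^2) := by
    rw [hc, Complex.norm_add_mul_I]
  have hkey : τ^2 * (1/τ^2 - 1) = 1 - τ^2 := by field_simp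
  have hsub : (1/(4*π))^2 ≤ (1/12)^2 := by
    have h : (1:ℝ)/(4*π) ≤ 1/12 := by
      apply one_div_le_one_div_of_le <;> linarith
    have h0 : (0:ℝ) ≤ 1/(4*π) := by positivity
    nlinarith
  have hupper_c : τ^2 * ‖c‖ ≤ 1 - τ^4/2 := by
    rw [habsc]
    have h1' : τ^2 * Real.sqrt ((1/(4*π))^2 + (1/τ^2 - 1)^2)
        = Real.sqrt ((τ^2)^2 * ((1/(4*π))^2 + (1/τ^2 - 1)^2)) := by
      rw [Real.sqrt_mul (by positivity), Real.sqrt_sq (by positivity)]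
    rw [h1']
    have h2' : (τ^2)^2 * ((1/(4*π))^2 + (1/τ^2 - 1)^2) ≤ (1 - τ^4/2)^2 := by
      have hexp : (τ^2)^2 * ((1/(4*π))^2 + (1/τ^2 - 1)^2)
          = (τ^2)^2 * (1/(4*π))^2 + (1 - τ^2)^2 := by
        have h := hkey
        nlinarith [h]
      rw [hexp]
      have hsub' : (τ^2)^2*(1/(4*π))^2 ≤ (τ^2)^2*(1/12)^2 :=
        mul_le_mul_of_nonneg_left hsub (by positivity)
      have hq : τ^2*τ^2 < (1/100)*τ^2 := by nlinarith [pow_pos hτ0 2]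
      nlinarith [hsub', hq, sq_nonneg (τ^2), sq_nonneg (τ^4)]
    calc Real.sqrt ((τ^2)^2 * ((1/(4*π))^2 + (1/τ^2 - 1)^2))
        ≤ Real.sqrt ((1 - τ^4/2)^2) := Real.sqrt_le_sqrt h2'
      _ = 1 - τ^4/2 := Real.sqrt_sq (by nlinarith [hτ2, sq_nonneg (τ^2), pow_pos hτ0 2])
  have hlower_c : 1 - τ^2 ≤ τ^2 * ‖c‖ := by
    rw [habsc]
    have h1' : Real.sqrt ((1/τ^2 - 1)^2) ≤ Real.sqrt ((1/(4*π))^2 + (1/τ^2 - 1)^2) :=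
      Real.sqrt_le_sqrt (by nlinarith [sq_nonneg (1/(4*π))])
    have h2' : Real.sqrt ((1/τ^2 - 1)^2) = 1/τ^2 - 1 := by
      rw [Real.sqrt_sq]
      nlinarith [sq_nonneg τ, one_div_pos.mpr (pow_pos hτ0 2)]
    nlinarith [Real.sqrt_nonneg ((1/(4*π))^2 + (1/τ^2 - 1)^2), sq_nonneg τ]
  have htri1 : ‖q₁‖ ≤ ‖c‖ + τ^2/2 := by
    calc ‖q₁‖ = ‖c + (q₁ - c)‖ := by ring_nf
      _ ≤ ‖c‖ + ‖q₁ - c‖ := norm_add_le _ _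
      _ ≤ ‖c‖ + τ^2/2 := by linarith [h1]
  have htri2 : ‖c‖ - τ^2/2 ≤ ‖q₁‖ := by
    have h := norm_add_le q₁ (c - q₁)
    rw [show q₁ + (c - q₁) = c by ring] at h
    have h' : ‖c - q₁‖ = ‖q₁ - c‖ := norm_sub_rev _ _
    linarith [h1, h, h'.le, h'.ge]
  have hq1_upper : τ^2 * ‖q₁‖ ≤ 1 := by nlinarith [htri1, hupper_c]
  have hq1_lower : 1 - ε < τ^2 * ‖q₁‖ := by nlinarith [htri2, hlower_c]
  -- ## Part B : q₂ bounds
  clear htri1 htri2 hupper_c hlower_c habsc hc hkey hsub h1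
  clear_value c
  clear hc_def c
  set w : ℂ := (2 / (Complex.I * (τ:ℂ))) * q₂ with hw_def
  have hIτ : Complex.I * (τ:ℂ) ≠ 0 :=
    mul_ne_zero Complex.I_ne_zero (by exact_mod_cast hτne)
  have hq2w : q₂ = Complex.I * (τ:ℂ) * w / 2 := by
    rw [hw_def]; field_simp [show (τ:ℂ) ≠ 0 by exact_mod_cast hτne]
  clear_value w
  clear hw_def
  have habsIτ2 : ‖Complex.I * (τ:ℂ) / 2‖ = τ/2 := by
    rw [norm_div, norm_mul, Complex.norm_I, Complex.norm_real, Real.norm_eq_abs, Complex.norm_two,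
      one_mul, abs_of_pos hτ0]
  have hconv : ‖q₂ - Complex.I * (τ:ℂ) / 2‖ = (τ/2) * ‖w - 1‖ := by
    rw [show q₂ - Complex.I * (τ:ℂ)/2 = (Complex.I * (τ:ℂ)/2) * (w - 1) by
      rw [hq2w]; ring, norm_mul, habsIτ2]
  have h5 : ‖w - 1‖ < 1/5 := by
    rw [hconv] at h2a
    nlinarith [norm_nonneg (w-1)]
  have hE : w^2 - 1 = (τ:ℂ)*w/2 + (τ:ℂ)^2*w^2*(1+Complex.I/(4*(π:ℂ))) + (τ:ℂ)^3*w^3/2 := by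
    have hk := key_ident τ hτne w
    rw [← hq2w, h2b] at hk
    linear_combination -hk
  have hBw : ‖w‖ ≤ 6/5 := by
    calc ‖w‖ = ‖1 + (w - 1)‖ := by ring_nf
      _ ≤ ‖1‖ + ‖w - 1‖ := norm_add_le _ _
      _ ≤ 6/5 := by rw [norm_one]; linarith
  have hBw1 : 9/5 ≤ ‖w + 1‖ := by
    have h := norm_add_le (w + 1) (-(w - 1))
    rw [show (w+1) + (-(w-1)) = (2:ℂ) by ring, Complex.norm_two, norm_neg] at h
    linarith
  have hcoeff : ‖1 + Complex.I/(4*(π:ℂ))‖ ≤ 13/12 := by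
    have h := norm_add_le 1 (Complex.I/(4*(π:ℂ)))
    rw [norm_one, norm_div, Complex.norm_I, norm_mul] at h
    have h4 : ‖(4:ℂ)‖ = 4 := by norm_num [Complex.norm_ofNat]
    have hππ : ‖((π:ℝ):ℂ)‖ = π := by rw [Complex.norm_real, Real.norm_eq_abs, abs_of_pos hπpos]
    rw [h4, hππ] at h
    have : (1:ℝ)/(4*π) ≤ 1/12 := by apply one_div_le_one_div_of_le <;> linarith
    linarith
  -- bound the RHS of hE
  have hB1 : ‖(τ:ℂ)*w/2‖ ≤ (6/10)*τ := by
    rw [norm_div, norm_mul, Complex.norm_real, Real.norm_eq_abs, Complex.norm_two, abs_of_pos hτ0]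
    nlinarith [norm_nonneg w]
  have hB2 : ‖(τ:ℂ)^2*w^2*(1+Complex.I/(4*(π:ℂ)))‖ ≤ (156/100)*τ^2 := by
    rw [norm_mul, norm_mul, norm_pow, norm_pow, Complex.norm_real, Real.norm_eq_abs, abs_of_pos hτ0]
    have h1' : ‖w‖ ^ 2 ≤ (6/5)^2 :=
      pow_le_pow_left₀ (norm_nonneg w) hBw 2
    have hK : ‖w‖ ^ 2 * ‖1+Complex.I/(4*(π:ℂ))‖ ≤ 39/25 := by
      nlinarith [norm_nonneg (1+Complex.I/(4*(π:ℂ))), hcoeff, h1',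
        sq_nonneg (‖w‖)]
    have := mul_le_mul_of_nonneg_left hK (le_of_lt (pow_pos hτ0 2))
    nlinarith [this]
  have hB3 : ‖(τ:ℂ)^3*w^3/2‖ ≤ (864/1000)*τ^3 := by
    rw [norm_div, norm_mul, norm_pow, norm_pow, Complex.norm_real, Real.norm_eq_abs, Complex.norm_two,
      abs_of_pos hτ0]
    have h1' : ‖w‖ ^ 3 ≤ (6/5)^3 :=
      pow_le_pow_left₀ (norm_nonneg w) hBw 3
    have := mul_le_mul_of_nonneg_left h1' (le_of_lt (pow_pos hτ0 3))
    nlinarith [this]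
  have hRHS : ‖w^2 - 1‖ ≤ (6/10)*τ + (156/100)*τ^2 + (864/1000)*τ^3 := by
    rw [hE]
    calc ‖(τ:ℂ)*w/2 + (τ:ℂ)^2*w^2*(1+Complex.I/(4*(π:ℂ))) + (τ:ℂ)^3*w^3/2‖
        ≤ ‖(τ:ℂ)*w/2 + (τ:ℂ)^2*w^2*(1+Complex.I/(4*(π:ℂ)))‖
            + ‖(τ:ℂ)^3*w^3/2‖ := norm_add_le _ _
      _ ≤ ‖(τ:ℂ)*w/2‖ + ‖(τ:ℂ)^2*w^2*(1+Complex.I/(4*(π:ℂ)))‖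
            + ‖(τ:ℂ)^3*w^3/2‖ := by linarith [norm_add_le ((τ:ℂ)*w/2) ((τ:ℂ)^2*w^2*(1+Complex.I/(4*(π:ℂ))))]
      _ ≤ _ := by linarith
  have hfact : ‖w - 1‖ * ‖w + 1‖ = ‖w^2 - 1‖ := by
    rw [← norm_mul]; ring_nf
  have hτq : τ^2 < (1/10)*τ := by nlinarith
  have hττ : τ^3 < (1/100)*τ := by nlinarith [pow_pos hτ0 2, sq_nonneg τ]
  have hw1 : ‖w - 1‖ ≤ (9/20)*τ := by
    have hm := mul_le_mul_of_nonneg_left hBw1 (norm_nonneg (w-1))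
    linarith [hm, hRHS, hfact, hτq, hττ]
  -- |q₂| relation
  have hBq2 : ‖q₂‖ = (τ/2) * ‖w‖ := by
    rw [show q₂ = (Complex.I * (τ:ℂ)/2) * w by rw [hq2w]; ring, norm_mul, habsIτ2]
  have hmain : (2/τ) * ‖q₂‖ = ‖w‖ := by
    rw [hBq2]; field_simp
  -- upper bound
  have hup : (2/τ) * ‖q₂‖ ≤ 1 + ε := by
    rw [hmain]
    calc ‖w‖ = ‖1 + (w-1)‖ := by ring_nf
      _ ≤ 1 + ‖w-1‖ := by
          simpa using norm_add_le 1 (w-1)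
      _ ≤ 1 + (9/20)*τ := by linarith
      _ ≤ 1 + ε := by nlinarith
  -- lower bound : Re w and |w|² estimate
  have hrew : 1 - (9/20)*τ ≤ w.re := by
    have h := Complex.abs_re_le_norm (w - 1)
    have h2' : (w - 1).re = w.re - 1 := by simp [Complex.sub_re]
    rw [h2'] at h
    have := abs_le.mp (le_trans h hw1) |>.1
    linarith
  have hre2 : (1 + (τ:ℂ)*w/2).re = 1 + (τ/2) * w.re := by
    rw [show (1 + (τ:ℂ)*w/2) = 1 + ((τ/2 : ℝ):ℂ)*w by push_cast; ring]
    simp [Complex.add_re, Complex.mul_re, Complex.ofReal_re, Complex.ofReal_im]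
  have hreabs : 1 + (τ/2) * w.re ≤ ‖1 + (τ:ℂ)*w/2‖ := by
    rw [← hre2]; exact Complex.re_le_norm _
  have hrest : ‖(τ:ℂ)^2*w^2*(1+Complex.I/(4*(π:ℂ))) + (τ:ℂ)^3*w^3/2‖
      ≤ (156/100)*τ^2 + (864/1000)*τ^3 := by
    calc _ ≤ ‖(τ:ℂ)^2*w^2*(1+Complex.I/(4*(π:ℂ)))‖ + ‖(τ:ℂ)^3*w^3/2‖ :=
          norm_add_le _ _
      _ ≤ _ := by linarith
  have hsq : 1 + (τ/2) * w.re - ((156/100)*τ^2 + (864/1000)*τ^3) ≤ ‖w‖ ^ 2 := by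
    have hw2 : w^2 = (1 + (τ:ℂ)*w/2) + ((τ:ℂ)^2*w^2*(1+Complex.I/(4*(π:ℂ))) + (τ:ℂ)^3*w^3/2) := by
      linear_combination hE
    have htr : ‖1 + (τ:ℂ)*w/2‖
        ≤ ‖w^2‖ + ‖(τ:ℂ)^2*w^2*(1+Complex.I/(4*(π:ℂ))) + (τ:ℂ)^3*w^3/2‖ := by
      have h := norm_add_le (w^2) (-(((τ:ℂ)^2*w^2*(1+Complex.I/(4*(π:ℂ))) + (τ:ℂ)^3*w^3/2)))
      rw [norm_neg] at h
      rw [show w^2 + -((τ:ℂ)^2*w^2*(1+Complex.I/(4*(π:ℂ))) + (τ:ℂ)^3*w^3/2) = 1 + (τ:ℂ)*w/2 by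
        linear_combination hE] at h
      exact h
    rw [norm_pow] at htr
    linarith [hreabs, hrest, htr]
  have hlow : 1 ≤ (2/τ) * ‖q₂‖ := by
    rw [hmain]
    have hm := mul_le_mul_of_nonneg_left hrew (by positivity : (0:ℝ) ≤ τ/2)
    have hgt : 1 < ‖w‖ ^ 2 := by linarith only [hsq, hm, hτq, hττ, hτ0]
    have hgt2 : 1 < ‖w‖ :=
      lt_of_pow_lt_pow_left₀ 2 (norm_nonneg w) (by simpa using hgt)
    linarith only [hgt2]
  exact ⟨hq1_lower, hq1_upper, hlow, hup⟩
end

section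
/- Let ρ > 0 and C_f, C_φ ≥ 0, and let g, h be holomorphic on an open set containing the closed disc {|z| ≤ ρ}, with |g(z)| ≤ C_f and |h(z)| ≤ C_φ·|z| for all |z| ≤ ρ. For w ∈ ℂ and n ∈ ℕ let P_n(w) denote the n-th Taylor coefficient at 0 of the holomorphic function z ↦ g(z)·e^{−w·h(z)}. Then for all n ∈ ℕ and all w ∈ ℂ one has |P_n(w)| ≤ C_f·e^{C_φ}·(|w|^n + ρ^{−n}). -/
open Real Complex


lemma cauchy_coeff_bound {f : ℂ → ℂ} {r M : ℝ} (hr : 0 < r)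
    (hf : DifferentiableOn ℂ f (Metric.closedBall 0 r))
    (hb : ∀ z : ℂ, ‖z‖ ≤ r → ‖f z‖ ≤ M) (n : ℕ) :
    ‖iteratedDeriv n f 0 / (n.factorial : ℂ)‖ ≤ M / r ^ n := by
  lift r to NNReal using hr.le with r' hr'
  have hr0 : (0 : NNReal) < r' := by exact_mod_cast hr
  have hp := hf.hasFPowerSeriesOnBall hr0
  set p := cauchyPowerSeries f 0 r' with hpdef
  have hiter : iteratedDeriv n f 0 = n.factorial • p.coeff n := by
    rw [iteratedDeriv_eq_iteratedFDeriv, ← hp.factorial_smul 1 n]; rfl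
  have hM : 0 ≤ M := le_trans (norm_nonneg _) (hb 0 (by simp [hr.le]))
  have hint : (∫ θ : ℝ in (0)..2 * π, ‖f (circleMap 0 r' θ)‖) ≤ M * (2 * π) := by
    have := intervalIntegral.norm_integral_le_of_norm_le_const (C := M)
      (f := fun θ : ℝ => ‖f (circleMap 0 r' θ)‖) (a := 0) (b := 2 * π) ?_
    · calc (∫ θ : ℝ in (0)..2 * π, ‖f (circleMap 0 r' θ)‖)
          ≤ ‖∫ θ : ℝ in (0)..2 * π, ‖f (circleMap 0 r' θ)‖‖ := le_abs_self _
        _ ≤ M * |2 * π - 0| := this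
        _ = M * (2 * π) := by rw [sub_zero, _root_.abs_of_pos Real.two_pi_pos]
    · intro θ _
      rw [norm_norm]
      exact hb (circleMap 0 r' θ) (by rw [norm_circleMap_zero]; exact le_of_eq (_root_.abs_of_nonneg hr.le))
  have hnorm : ‖p.coeff n‖ ≤ M * ((r' : ℝ))⁻¹ ^ n := by
    have h1 := norm_cauchyPowerSeries_le f 0 r' n
    rw [p.norm_apply_eq_norm_coef] at h1
    calc ‖p.coeff n‖
        ≤ ((2 * π)⁻¹ * ∫ θ : ℝ in (0)..2 * π, ‖f (circleMap 0 r' θ)‖) * |(r' : ℝ)|⁻¹ ^ n := h1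
      _ ≤ ((2 * π)⁻¹ * (M * (2 * π))) * |(r' : ℝ)|⁻¹ ^ n := by gcongr
      _ = M * ((r' : ℝ))⁻¹ ^ n := by
          rw [_root_.abs_of_nonneg hr.le]
          have h2 : (2 * π) ≠ 0 := Real.two_pi_pos.ne'
          field_simp
  have hne : ((n.factorial : ℂ)) ≠ 0 := by exact_mod_cast n.factorial_ne_zero
  rw [hiter, nsmul_eq_mul, mul_div_cancel_left₀ _ hne]
  calc ‖p.coeff n‖ ≤ M * ((r' : ℝ))⁻¹ ^ n := hnorm
    _ = M / (r' : ℝ) ^ n := by rw [inv_pow, ← div_eq_mul_inv]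

theorem statement17 (ρ Cf Cφ : ℝ) (hρ : 0 < ρ) (hCf : 0 ≤ Cf) (hCφ : 0 ≤ Cφ)
    (U : Set ℂ) (hU : IsOpen U) (hball : Metric.closedBall (0 : ℂ) ρ ⊆ U)
    (g h : ℂ → ℂ) (hg : DifferentiableOn ℂ g U) (hh : DifferentiableOn ℂ h U)
    (hgb : ∀ z : ℂ, ‖z‖ ≤ ρ → ‖g z‖ ≤ Cf)
    (hhb : ∀ z : ℂ, ‖z‖ ≤ ρ → ‖h z‖ ≤ Cφ * ‖z‖) :
    ∀ (n : ℕ) (w : ℂ),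
      ‖iteratedDeriv n (fun z : ℂ => g z * Complex.exp (-w * h z)) 0 / (n.factorial : ℂ)‖ ≤
        Cf * Real.exp Cφ * (‖w‖ ^ n + (ρ ^ n)⁻¹) := by
  intro n w
  set r : ℝ := if w = 0 then ρ else min ρ (‖w‖)⁻¹ with hrdef
  have hw0 : ∀ hw : w ≠ 0, 0 < ‖w‖ := fun hw => by
    simpa using (norm_pos_iff.mpr hw)
  have hr0 : 0 < r := by
    rw [hrdef]; split
    · exact hρ
    · exact lt_min hρ (inv_pos.mpr (hw0 ‹_›))
  have hrρ : r ≤ ρ := by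
    rw [hrdef]; split
    · exact le_rfl
    · exact min_le_left _ _
  have hwr : ‖w‖ * r ≤ 1 := by
    rw [hrdef]; split
    · simp [*]
    · calc ‖w‖ * min ρ (‖w‖)⁻¹
          ≤ ‖w‖ * (‖w‖)⁻¹ := by
            gcongr
            exact min_le_right _ _
        _ = 1 := mul_inv_cancel₀ (hw0 ‹_›).ne'
  have hsub : Metric.closedBall (0 : ℂ) r ⊆ U :=
    (Metric.closedBall_subset_closedBall hrρ).trans hball
  have hdiff : DifferentiableOn ℂ (fun z : ℂ => g z * Complex.exp (-w * h z))
      (Metric.closedBall 0 r) :=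
    (hg.mul ((hh.const_mul (-w)).cexp)).mono hsub
  have hbound : ∀ z : ℂ, ‖z‖ ≤ r →
      ‖g z * Complex.exp (-w * h z)‖ ≤ Cf * Real.exp Cφ := by
    intro z hz
    have hzρ : ‖z‖ ≤ ρ := hz.trans hrρ
    rw [norm_mul]
    have he : ‖Complex.exp (-w * h z)‖ ≤ Real.exp Cφ := by
      rw [Complex.norm_exp]
      apply Real.exp_le_exp.mpr
      calc (-w * h z).re ≤ ‖-w * h z‖ := Complex.re_le_norm _
        _ = ‖w‖ * ‖h z‖ := by rw [norm_mul, norm_neg]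
        _ ≤ ‖w‖ * (Cφ * ‖z‖) := by
            gcongr
            exact hhb z hzρ
        _ = Cφ * (‖w‖ * ‖z‖) := by ring
        _ ≤ Cφ * 1 := by
            gcongr
            calc ‖w‖ * ‖z‖ ≤ ‖w‖ * r := by
                  gcongr
              _ ≤ 1 := hwr
        _ = Cφ := mul_one Cφ
    exact mul_le_mul (hgb z hzρ) he (norm_nonneg _) hCf
  have hkey := cauchy_coeff_bound hr0 hdiff hbound n
  refine hkey.trans ?_
  rw [div_eq_mul_inv]
  have hrn : (r ^ n)⁻¹ ≤ ‖w‖ ^ n + (ρ ^ n)⁻¹ := by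
    rw [hrdef]
    split
    · exact le_add_of_nonneg_left (pow_nonneg (norm_nonneg w) n)
    · rcases min_cases ρ (‖w‖)⁻¹ with ⟨hm, _⟩ | ⟨hm, _⟩
      · rw [hm]
        exact le_add_of_nonneg_left (pow_nonneg (norm_nonneg w) n)
      · rw [hm, ← inv_pow, inv_inv]
        exact le_add_of_nonneg_right (by positivity)
  gcongr
end

section
/- For every real x with 0 < x ≤ 1/2 one has π·x·(137x + 144)/128 + π·log(1 − 9x/8) > 0, where log is the real natural logarithm (note 1 − 9x/8 > 0 for x ≤ 1/2). -/
open Real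

/-- Derivative of `log(1-t) + t + t²/2 + t³/3 + t⁴/4 + t⁵/5 + t⁶/(6(1-t))` is
`t⁶/(6(1-t)²)`. -/
lemma logF_hasDeriv (t : ℝ) (ht : t < 1) :
    HasDerivAt (fun t : ℝ => Real.log (1 - t) +
      (t + t ^ 2 / 2 + t ^ 3 / 3 + t ^ 4 / 4 + t ^ 5 / 5 + t ^ 6 / (6 * (1 - t))))
      (t ^ 6 / (6 * (1 - t) ^ 2)) t := by
  have h1 : (1 : ℝ) - t ≠ 0 := by linarith
  have hlin : HasDerivAt (fun t : ℝ => 1 - t) (-1) t := by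
    simpa using (hasDerivAt_id t).const_sub 1
  have hlog : HasDerivAt (fun t : ℝ => Real.log (1 - t)) ((1 - t)⁻¹ * (-1)) t :=
    (Real.hasDerivAt_log h1).comp t hlin
  have hfrac : HasDerivAt (fun t : ℝ => t ^ 6 / (6 * (1 - t)))
      ((6 * t ^ 5 * (6 * (1 - t)) - t ^ 6 * (6 * (-1))) / (6 * (1 - t)) ^ 2) t := by
    have hden : HasDerivAt (fun t : ℝ => 6 * (1 - t)) (6 * (-1)) t := hlin.const_mul 6
    have hnum : HasDerivAt (fun t : ℝ => t ^ 6) (6 * t ^ 5) t := by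
      simpa using hasDerivAt_pow 6 t
    exact hnum.div hden (by intro h; apply h1; linarith [mul_eq_zero.mp h]; )
  have hpoly : HasDerivAt
      (fun t : ℝ => t + t ^ 2 / 2 + t ^ 3 / 3 + t ^ 4 / 4 + t ^ 5 / 5)
      (1 + t + t ^ 2 + t ^ 3 + t ^ 4) t := by
    have h2 : HasDerivAt (fun t : ℝ => t ^ 2 / 2) t t := by
      simpa using (hasDerivAt_pow 2 t).div_const 2
    have h3 : HasDerivAt (fun t : ℝ => t ^ 3 / 3) (t ^ 2) t := by
      simpa using (hasDerivAt_pow 3 t).div_const 3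
    have h4 : HasDerivAt (fun t : ℝ => t ^ 4 / 4) (t ^ 3) t := by
      simpa using (hasDerivAt_pow 4 t).div_const 4
    have h5 : HasDerivAt (fun t : ℝ => t ^ 5 / 5) (t ^ 4) t := by
      simpa using (hasDerivAt_pow 5 t).div_const 5
    exact (((hasDerivAt_id t).add h2).add h3).add h4 |>.add h5
  have := hlog.add ((hpoly.add hfrac))
  refine this.congr_deriv ?_
  have h2 : (6 : ℝ) * (1 - t) ≠ 0 := by positivity
  field_simp
  ring

/-- Power-series lower bound for `log(1-a)`. -/
lemma log_lower (a : ℝ) (ha0 : 0 ≤ a) (ha : a ≤ 9 / 16) :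
    -(a + a ^ 2 / 2 + a ^ 3 / 3 + a ^ 4 / 4 + a ^ 5 / 5 + a ^ 6 / (6 * (1 - a)))
      ≤ Real.log (1 - a) := by
  set F : ℝ → ℝ := fun t => Real.log (1 - t) +
      (t + t ^ 2 / 2 + t ^ 3 / 3 + t ^ 4 / 4 + t ^ 5 / 5 + t ^ 6 / (6 * (1 - t))) with hF
  have hd : ∀ t ∈ Set.Icc (0 : ℝ) (9 / 16), HasDerivAt F (t ^ 6 / (6 * (1 - t) ^ 2)) t := by
    intro t ht
    exact logF_hasDeriv t (by linarith [ht.2])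
  have mono : MonotoneOn F (Set.Icc (0 : ℝ) (9 / 16)) := by
    apply monotoneOn_of_deriv_nonneg (convex_Icc _ _)
    · exact fun t ht => (hd t ht).differentiableAt.continuousAt.continuousWithinAt
    · intro t ht
      rw [interior_Icc] at ht
      exact (hd t ⟨ht.1.le, ht.2.le⟩).differentiableAt.differentiableWithinAt
    · intro t ht
      rw [interior_Icc] at ht
      rw [(hd t ⟨ht.1.le, ht.2.le⟩).deriv]
      have : (0:ℝ) < 1 - t := by linarith [ht.2]
      positivity
  have h0 : F 0 = 0 := by simp [hF]
  have := mono (Set.mem_Icc.mpr ⟨le_refl 0, by norm_num⟩) (Set.mem_Icc.mpr ⟨ha0, ha⟩) ha0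
  rw [h0] at this
  simp only [hF] at this
  linarith

theorem statement18 (x : ℝ) (hx0 : 0 < x) (hx : x ≤ 1 / 2) :
    0 < π * x * (137 * x + 144) / 128 + π * Real.log (1 - 9 * x / 8) := by
  set a : ℝ := 9 * x / 8 with ha_def
  have ha0 : 0 < a := by positivity
  have ha : a ≤ 9 / 16 := by rw [ha_def]; linarith
  have h1a : (0:ℝ) < 1 - a := by linarith
  have hlog := log_lower a ha0.le ha
  -- positivity of the quartic h(a) = 28/81 - 55a/81 + a²/12 + a³/20 + a⁴/30
  have hh : 0 < 28 / 81 - 55 * a / 81 + a ^ 2 / 12 + a ^ 3 / 20 + a ^ 4 / 30 := by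
    nlinarith [sq_nonneg a, sq_nonneg (a - 9/16), sq_nonneg (a^2 - 81/256),
      mul_nonneg (mul_nonneg ha0.le ha0.le) (sub_nonneg.mpr ha),
      mul_nonneg (mul_nonneg (mul_nonneg ha0.le ha0.le) ha0.le) (sub_nonneg.mpr ha)]
  -- key algebraic identity:
  have h6 : (0:ℝ) < 6 * (1 - a) := by linarith
  have hc : a ^ 6 / (6 * (1 - a)) * (6 * (1 - a)) = a ^ 6 :=
    div_mul_cancel₀ _ (ne_of_gt h6)
  have hkey : (x * (137 * x + 144) / 128 -
      (a + a ^ 2 / 2 + a ^ 3 / 3 + a ^ 4 / 4 + a ^ 5 / 5 + a ^ 6 / (6 * (1 - a))))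
        * (6 * (1 - a))
      = 6 * (a ^ 2 * (28 / 81 - 55 * a / 81 + a ^ 2 / 12 + a ^ 3 / 20 + a ^ 4 / 30)) := by
    have expand : (x * (137 * x + 144) / 128 -
        (a + a ^ 2 / 2 + a ^ 3 / 3 + a ^ 4 / 4 + a ^ 5 / 5 + a ^ 6 / (6 * (1 - a))))
          * (6 * (1 - a))
        = (x * (137 * x + 144) / 128 -
            (a + a ^ 2 / 2 + a ^ 3 / 3 + a ^ 4 / 4 + a ^ 5 / 5)) * (6 * (1 - a)) -
            a ^ 6 / (6 * (1 - a)) * (6 * (1 - a)) := by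
      ring
    rw [expand, hc, ha_def]; ring
  have hD : 0 < x * (137 * x + 144) / 128 -
      (a + a ^ 2 / 2 + a ^ 3 / 3 + a ^ 4 / 4 + a ^ 5 / 5 + a ^ 6 / (6 * (1 - a))) := by
    have := (eq_div_iff (ne_of_gt h6)).mpr hkey
    rw [this]
    positivity
  have hpos : 0 < x * (137 * x + 144) / 128 + Real.log (1 - a) := by
    linarith [hlog]
  have : π * x * (137 * x + 144) / 128 + π * Real.log (1 - 9 * x / 8)
      = π * (x * (137 * x + 144) / 128 + Real.log (1 - a)) := by
    rw [ha_def]; ring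
  rw [this]
  exact mul_pos Real.pi_pos hpos
end

section
/- For every real x with 0 < x ≤ 11/40 one has (9π/5)x² − 2√2·π·x³ − (4π/5)x⁴ − 8√2·π·x⁵ − (144/5)x⁶ − 19487171·x⁷/(31250·(5 − 11x)) > 0 (note 5 − 11x > 0 for x ≤ 11/40). -/
open Real

theorem statement19 (x : ℝ) (hx0 : 0 < x) (hx : x ≤ 11 / 40) :
    0 < (9 * π / 5) * x ^ 2 - 2 * Real.sqrt 2 * π * x ^ 3 - (4 * π / 5) * x ^ 4
        - 8 * Real.sqrt 2 * π * x ^ 5 - (144 / 5) * x ^ 6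
        - 19487171 * x ^ 7 / (31250 * (5 - 11 * x)) := by
  have hD : (0:ℝ) < 31250 * (5 - 11 * x) := by nlinarith
  have hs2 : Real.sqrt 2 < 1.5 := by
    nlinarith [Real.sq_sqrt (by norm_num : (2:ℝ) ≥ 0), Real.sqrt_nonneg 2]
  have hs2' : (0:ℝ) ≤ Real.sqrt 2 := Real.sqrt_nonneg 2
  have hpi1 : π > 3.14 := by linarith [Real.pi_gt_d6]
  have hpi2 : π < 3.15 := by linarith [Real.pi_lt_d2]
  have hx2 : (0:ℝ) < x ^ 2 := pow_pos hx0 2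
  have hx3 : (0:ℝ) < x ^ 3 := pow_pos hx0 3
  have hx4 : (0:ℝ) < x ^ 4 := pow_pos hx0 4
  have hx5 : (0:ℝ) < x ^ 5 := pow_pos hx0 5
  have hsp : Real.sqrt 2 * π < 4.725 := by nlinarith
  have h1 : (9 * π / 5) * x ^ 2 ≥ 5.652 * x ^ 2 := by nlinarith
  have h2 : 2 * Real.sqrt 2 * π * x ^ 3 ≤ 9.45 * x ^ 3 := by nlinarith [mul_pos hx3 (by linarith : (0:ℝ) < 4.725 - Real.sqrt 2 * π)]
  have h3 : (4 * π / 5) * x ^ 4 ≤ 2.52 * x ^ 4 := by nlinarith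
  have h4 : 8 * Real.sqrt 2 * π * x ^ 5 ≤ 37.8 * x ^ 5 := by nlinarith [mul_pos hx5 (by linarith : (0:ℝ) < 4.725 - Real.sqrt 2 * π)]
  have key : 0 < 5.652 * x ^ 2 - 9.45 * x ^ 3 - 2.52 * x ^ 4 - 37.8 * x ^ 5
      - (144 / 5) * x ^ 6 - 19487171 * x ^ 7 / (31250 * (5 - 11 * x)) := by
    rw [sub_pos, div_lt_iff₀ hD]
    nlinarith [pow_le_pow_left₀ hx0.le hx 3, pow_le_pow_left₀ hx0.le hx 4,
      pow_le_pow_left₀ hx0.le hx 5, pow_le_pow_left₀ hx0.le hx 6,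
      pow_le_pow_left₀ hx0.le hx 7, pow_pos hx0 6, pow_pos hx0 7,
      mul_pos hx2 hD, mul_pos hx3 hD, mul_pos hx4 hD, mul_pos hx5 hD]
  linarith
end
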